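/- arXiv:1507.02378 — 14 statements merged into one kernel-verified Lean document; each statement's English description precedes it below -/
import Mathlib

section
/- Let L > 0 be a real number and let a, c : ℕ → ℝ be sequences with a j ≥ 0 and c j ≥ 0 for all j, a 1 ≤ c 1, and a i ≤ (1 + 1/L) · (∑_{j=1}^{i-1} a j) + c i for every i ≥ 2. Then for every i ≥ 1, ∑_{j=1}^{i} a j ≤ (2 + 1/L)^{i-1} · (∑_{j=1}^{i} c j). -/
/-- Abstract form of the service-tree weight bound for Algorithm OnAlgTreesGeneral
on `L`-decreasing trees (Lemma `l:complete`): `a i` is the total weight of the depth-`i`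
nodes of the service tree `X = C ∪ E`, and `c i` the total weight of the depth-`i`
nodes of the critical subtree `C`. -/
theorem stmt1 (L : ℝ) (hL : 0 < L) (a c : ℕ → ℝ)
    (ha : ∀ j, 0 ≤ a j) (hc : ∀ j, 0 ≤ c j) (h1 : a 1 ≤ c 1)
    (hrec : ∀ i, 2 ≤ i → a i ≤ (1 + 1 / L) * (∑ j ∈ Finset.Icc 1 (i - 1), a j) + c i) :
    ∀ i, 1 ≤ i →
      ∑ j ∈ Finset.Icc 1 i, a j ≤ (2 + 1 / L) ^ (i - 1) * ∑ j ∈ Finset.Icc 1 i, c j := by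
  have hLpos : 0 < 1 / L := by positivity
  have hR1 : (1:ℝ) ≤ 2 + 1 / L := by linarith
  have hSnn : ∀ i, 0 ≤ ∑ j ∈ Finset.Icc 1 i, a j :=
    fun i => Finset.sum_nonneg (fun j _ => ha j)
  have hTnn : ∀ i, 0 ≤ ∑ j ∈ Finset.Icc 1 i, c j :=
    fun i => Finset.sum_nonneg (fun j _ => hc j)
  intro i hi
  induction i, hi using Nat.le_induction with
  | base => simpa using h1
  | succ n hn ih =>
    have hsplit : ∀ f : ℕ → ℝ, ∑ j ∈ Finset.Icc 1 (n+1), f j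
        = (∑ j ∈ Finset.Icc 1 n, f j) + f (n+1) := by
      intro f
      rw [← Finset.Ico_add_one_right_eq_Icc, Finset.sum_Ico_succ_top (by omega), Finset.Ico_add_one_right_eq_Icc]
    have hrec' := hrec (n+1) (by omega)
    simp only [Nat.add_sub_cancel] at hrec' ⊢
    rw [hsplit a, hsplit c]
    have hpow : (1:ℝ) ≤ (2 + 1/L) ^ n := one_le_pow₀ hR1
    have hstep : (∑ j ∈ Finset.Icc 1 n, a j) + a (n+1)
        ≤ (2 + 1/L) * (∑ j ∈ Finset.Icc 1 n, a j) + c (n+1) := by linarith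
    have hih : (2 + 1/L) * (∑ j ∈ Finset.Icc 1 n, a j)
        ≤ (2 + 1/L) * ((2 + 1/L) ^ (n-1) * ∑ j ∈ Finset.Icc 1 n, c j) := by
      exact mul_le_mul_of_nonneg_left ih (by linarith)
    have hpoweq : (2 + 1/L) * (2 + 1/L) ^ (n-1) = (2 + 1/L) ^ n := by
      rw [← pow_succ']
      congr 1
      omega
    calc (∑ j ∈ Finset.Icc 1 n, a j) + a (n+1)
        ≤ (2 + 1/L) * ((2 + 1/L) ^ (n-1) * ∑ j ∈ Finset.Icc 1 n, c j) + c (n+1) := by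
          linarith
      _ = (2 + 1/L) ^ n * (∑ j ∈ Finset.Icc 1 n, c j) + c (n+1) := by
          rw [← mul_assoc, hpoweq]
      _ ≤ (2 + 1/L) ^ n * ((∑ j ∈ Finset.Icc 1 n, c j) + c (n+1)) := by
          have := hc (n+1)
          nlinarith
end

section
/- Let (V, r, par) be a finite rooted tree, let ℓ : V → ℝ with ℓ u ≥ 0 for all u, and let w : V → ℝ → ℝ be such that for every u ∈ V the function w u is continuous, nondecreasing, nonnegative, and satisfies w u 0 = 0. For a set Z ⊆ V and time t write W(Z,t) = ∑_{u∈Z} w u t. Let v ∈ V, let t* ≥ 0, and let C be a subtree rooted at v with W(C, t*) = ℓ(C). Assume t* is minimal in the sense that for every subtree Z rooted at v and every s with 0 ≤ s < t*, W(Z, s) < ℓ(Z). Then for every u ∈ C, the induced subtree Y = C ∩ desc(u) satisfies W(Y, t*) ≥ ℓ(Y); consequently there is a least time τ(Y) ∈ [0, t*] with W(Y, τ(Y)) = ℓ(Y), so the maturity time of u is at most τ(Y), which is at most t*, the maturity time of v. -/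
open scoped Classical

/-- `u` is a descendant of `v` (equivalently, `v` is an ancestor of `u`). -/
def IsDesc {V : Type*} (par : V → V) (u v : V) : Prop := ∃ n : ℕ, par^[n] u = v

/-- `Z` is a subtree rooted at `v`: it contains `v`, consists of descendants of `v`,
and is closed under taking parents (except at `v`). -/
def IsSubtree {V : Type*} [DecidableEq V] (par : V → V) (v : V) (Z : Finset V) : Prop :=
  v ∈ Z ∧ (∀ u ∈ Z, IsDesc par u v) ∧ ∀ u ∈ Z, u ≠ v → par u ∈ Z

lemma desc_antisymm {V : Type*} (r : V) (par : V → V) (hroot : par r = r)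
    (hreach : ∀ v, ∃ n : ℕ, par^[n] v = r) {u v : V}
    (h1 : IsDesc par u v) (h2 : IsDesc par v u) : u = v := by
  obtain ⟨n, hn⟩ := h1
  obtain ⟨m, hm⟩ := h2
  have hper : par^[m + n] u = u := by
    rw [Function.iterate_add_apply, hn, hm]
  rcases Nat.eq_zero_or_pos (m + n) with h0 | hpos
  · have : n = 0 := by omega
    simpa [this] using hn
  · obtain ⟨k, hk⟩ := hreach u
    have hper' : par^[k * (m + n)] u = u := by
      have : Function.IsPeriodicPt par (m + n) u := hper
      exact (this.const_mul k)
    have hkle : k ≤ k * (m + n) := Nat.le_mul_of_pos_right k hpos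
    have hur : u = r := by
      have : par^[(k * (m + n) - k) + k] u = u := by
        rw [Nat.sub_add_cancel hkle]; exact hper'
      rw [Function.iterate_add_apply, hk, Function.iterate_fixed hroot] at this
      exact this.symm
    have hvr : v = r := by
      rw [← hn, hur, Function.iterate_fixed hroot]
    rw [hur, hvr]

/-- Lemma `maturity-critical`: if `C` is a critical subtree of `v`, i.e. a subtree rooted
at `v` whose waiting cost at the maturity time `t*` equals its weight, where `t*` is the
first time at which any subtree rooted at `v` is mature, then every induced subtree
`Y = C ∩ desc(u)` for `u ∈ C` is mature at `t*`, and hence has a least time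
`τ(Y) ∈ [0, t*]` at which its waiting cost equals its weight; so the maturity time of
`u` is at most `τ(Y) ≤ t*`. -/
theorem stmt2 {V : Type*} [Fintype V] [DecidableEq V]
    (r : V) (par : V → V) (hroot : par r = r) (hreach : ∀ v, ∃ n : ℕ, par^[n] v = r)
    (ℓ : V → ℝ) (hℓ : ∀ u, 0 ≤ ℓ u)
    (w : V → ℝ → ℝ)
    (hwcont : ∀ u, Continuous (w u)) (hwmono : ∀ u, Monotone (w u))
    (hwnonneg : ∀ u t, 0 ≤ w u t) (hw0 : ∀ u, w u 0 = 0)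
    (v : V) (tstar : ℝ) (htstar : 0 ≤ tstar)
    (C : Finset V) (hC : IsSubtree par v C)
    (hmature : ∑ u ∈ C, w u tstar = ∑ u ∈ C, ℓ u)
    (hmin : ∀ Z : Finset V, IsSubtree par v Z → ∀ s, 0 ≤ s → s < tstar →
      ∑ u ∈ Z, w u s < ∑ u ∈ Z, ℓ u) :
    ∀ u ∈ C,
      (∑ x ∈ C.filter (fun x => IsDesc par x u), ℓ x ≤
        ∑ x ∈ C.filter (fun x => IsDesc par x u), w x tstar) ∧
      ∃ τ : ℝ, 0 ≤ τ ∧ τ ≤ tstar ∧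
        (∑ x ∈ C.filter (fun x => IsDesc par x u), w x τ =
          ∑ x ∈ C.filter (fun x => IsDesc par x u), ℓ x) ∧
        ∀ s, 0 ≤ s →
          (∑ x ∈ C.filter (fun x => IsDesc par x u), w x s =
            ∑ x ∈ C.filter (fun x => IsDesc par x u), ℓ x) → τ ≤ s := by
  intro u hu
  set Y : Finset V := C.filter (fun x => IsDesc par x u) with hYdef
  -- Part 1: ℓ(Y) ≤ W(Y, t*)
  have key : ∑ x ∈ Y, ℓ x ≤ ∑ x ∈ Y, w x tstar := by
    by_cases huv : u = v
    · have hfil : Y = C := by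
        rw [hYdef, Finset.filter_true_of_mem]
        intro x hx
        rw [huv]; exact hC.2.1 x hx
      rw [hfil]
      exact le_of_eq hmature.symm
    · set Z : Finset V := C.filter (fun x => ¬ IsDesc par x u) with hZdef
      have hZsub : IsSubtree par v Z := by
        refine ⟨?_, ?_, ?_⟩
        · rw [hZdef, Finset.mem_filter]
          refine ⟨hC.1, fun hdv => ?_⟩
          exact huv (desc_antisymm r par hroot hreach (hC.2.1 u hu) hdv)
        · intro x hx
          exact hC.2.1 x (Finset.mem_of_mem_filter x hx)
        · intro x hx hxv
          rw [hZdef, Finset.mem_filter] at hx ⊢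
          refine ⟨hC.2.2 x hx.1 hxv, fun hdp => ?_⟩
          obtain ⟨n, hn⟩ := hdp
          exact hx.2 ⟨n + 1, by rw [Function.iterate_add_apply]; simpa using hn⟩
      have hZle : ∑ x ∈ Z, w x tstar ≤ ∑ x ∈ Z, ℓ x := by
        rcases eq_or_lt_of_le htstar with h0 | hpos
        · have : ∑ x ∈ Z, w x tstar = 0 := by
            rw [← h0]; simp [hw0]
          rw [this]
          exact Finset.sum_nonneg fun x _ => hℓ x
        · have hcont : Continuous (fun s => ∑ x ∈ Z, w x s) :=
            continuous_finset_sum _ fun x _ => hwcont x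
          have htend : Filter.Tendsto (fun s => ∑ x ∈ Z, w x s)
              (nhdsWithin tstar (Set.Iio tstar)) (nhds (∑ x ∈ Z, w x tstar)) :=
            (hcont.tendsto tstar).mono_left nhdsWithin_le_nhds
          refine le_of_tendsto htend ?_
          filter_upwards [Ioo_mem_nhdsLT_of_mem (Set.mem_Ioc.mpr ⟨hpos, le_refl _⟩)]
            with s hs
          exact (hmin Z hZsub s hs.1.le hs.2).le
      have split1 := Finset.sum_filter_add_sum_filter_not C (fun x => IsDesc par x u) ℓ
      have split2 := Finset.sum_filter_add_sum_filter_not C (fun x => IsDesc par x u)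
        (fun x => w x tstar)
      rw [← hYdef, ← hZdef] at split1 split2
      linarith
  refine ⟨key, ?_⟩
  -- Part 2: least time τ
  set g : ℝ → ℝ := fun s => ∑ x ∈ Y, w x s with hgdef
  set L : ℝ := ∑ x ∈ Y, ℓ x with hLdef
  have hgcont : Continuous g := continuous_finset_sum _ fun x _ => hwcont x
  have hg0 : g 0 = 0 := by simp [hgdef, hw0]
  have hL0 : 0 ≤ L := Finset.sum_nonneg fun x _ => hℓ x
  have hmem : L ∈ Set.Icc (g 0) (g tstar) := ⟨by rw [hg0]; exact hL0, key⟩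
  obtain ⟨τ0, hτ0, hgτ0⟩ := intermediate_value_Icc htstar hgcont.continuousOn hmem
  set S : Set ℝ := Set.Icc 0 tstar ∩ g ⁻¹' {L} with hSdef
  have hSclosed : IsClosed S := isClosed_Icc.inter (isClosed_singleton.preimage hgcont)
  have hSne : S.Nonempty := ⟨τ0, hτ0, hgτ0⟩
  have hSbdd : BddBelow S := ⟨0, fun x hx => hx.1.1⟩
  have hτS : sInf S ∈ S := hSclosed.csInf_mem hSne hSbdd
  refine ⟨sInf S, hτS.1.1, hτS.1.2, hτS.2, ?_⟩
  intro s hs hgs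
  by_cases hsle : s ≤ tstar
  · exact csInf_le hSbdd ⟨⟨hs, hsle⟩, hgs⟩
  · exact le_trans hτS.1.2 (le_of_not_ge hsle)
end

section
/- Let (V, r, par) be a finite rooted tree, ℓ : V → ℝ with ℓ u ≥ 0 for all u, w : V → ℝ, and q ∈ V with ℓ q > 0. Suppose X and Y are service subtrees with q ∈ X and q ∈ Y, that ∑_{u∈X} w u = ℓ(X), and that ∑_{u∈Z} w u ≤ ℓ(Z) for every service subtree Z. Then ∑_{u∈Y∖X} w u < ℓ(Y). -/
open scoped Classical

/-- Lemma `maturity times of q`, part (a): if `X` is a service subtree containing the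
quasi-root `q` with `∑_{u∈X} w u = ℓ(X)` and every service subtree `Z` satisfies
`∑_{u∈Z} w u ≤ ℓ(Z)`, then for every service subtree `Y` containing `q`,
`∑_{u∈Y∖X} w u < ℓ(Y)`. -/
theorem stmt3 {V : Type*} [Fintype V] [DecidableEq V]
    (r : V) (par : V → V) (hroot : par r = r) (hreach : ∀ v, ∃ n : ℕ, par^[n] v = r)
    (ℓ : V → ℝ) (hℓ : ∀ u, 0 ≤ ℓ u) (w : V → ℝ)
    (q : V) (hq : 0 < ℓ q)
    (X Y : Finset V) (hX : IsSubtree par r X) (hY : IsSubtree par r Y)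
    (hqX : q ∈ X) (hqY : q ∈ Y)
    (hXfull : ∑ u ∈ X, w u = ∑ u ∈ X, ℓ u)
    (hall : ∀ Z : Finset V, IsSubtree par r Z → ∑ u ∈ Z, w u ≤ ∑ u ∈ Z, ℓ u) :
    ∑ u ∈ Y \ X, w u < ∑ u ∈ Y, ℓ u := by
  -- X ∪ Y is a service subtree
  have hU : IsSubtree par r (X ∪ Y) := by
    obtain ⟨hrX, hdX, hpX⟩ := hX
    obtain ⟨hrY, hdY, hpY⟩ := hY
    refine ⟨Finset.mem_union_left _ hrX, ?_, ?_⟩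
    · intro u hu
      rcases Finset.mem_union.1 hu with h | h
      · exact hdX u h
      · exact hdY u h
    · intro u hu hne
      rcases Finset.mem_union.1 hu with h | h
      · exact Finset.mem_union_left _ (hpX u h hne)
      · exact Finset.mem_union_right _ (hpY u h hne)
  have hUle := hall (X ∪ Y) hU
  -- split sums: X ∪ Y = X ⊎ (Y \ X)
  have hsplitw : ∑ u ∈ X ∪ Y, w u = ∑ u ∈ X, w u + ∑ u ∈ Y \ X, w u := by
    rw [← Finset.sum_union (Finset.disjoint_sdiff), Finset.union_sdiff_self_eq_union]
  have hsplitℓ : ∑ u ∈ X ∪ Y, ℓ u = ∑ u ∈ X, ℓ u + ∑ u ∈ Y \ X, ℓ u := by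
    rw [← Finset.sum_union (Finset.disjoint_sdiff), Finset.union_sdiff_self_eq_union]
  have h1 : ∑ u ∈ Y \ X, w u ≤ ∑ u ∈ Y \ X, ℓ u := by
    have := hUle
    rw [hsplitw, hsplitℓ, hXfull] at this
    linarith
  -- ℓ(Y \ X) + ℓ q ≤ ℓ(Y)
  have h2 : ∑ u ∈ Y \ X, ℓ u + ℓ q ≤ ∑ u ∈ Y, ℓ u := by
    have hsub : insert q (Y \ X) ⊆ Y := by
      intro u hu
      rcases Finset.mem_insert.1 hu with rfl | hu
      · exact hqY
      · exact (Finset.mem_sdiff.1 hu).1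
    have hqn : q ∉ Y \ X := fun h => (Finset.mem_sdiff.1 h).2 hqX
    calc ∑ u ∈ Y \ X, ℓ u + ℓ q = ∑ u ∈ insert q (Y \ X), ℓ u := by
          rw [Finset.sum_insert hqn]; ring
      _ ≤ ∑ u ∈ Y, ℓ u := Finset.sum_le_sum_of_subset_of_nonneg hsub
          (fun u _ _ => hℓ u)
  linarith
end

section
/- Let (V, r, par) be a finite rooted tree, ℓ : V → ℝ with ℓ r = 0 and ℓ u ≥ 0 for all u, and w : V → ℝ with w u ≥ 0 for all u. For a service subtree X define cost(X) = ℓ(X) + ∑_{u∉X} w u. Then a service subtree X satisfies cost(X) ≤ cost(Y) for every service subtree Y if and only if both of the following hold: (a) for every v ∈ X, ∑_{u ∈ X ∩ desc(v)} w u ≥ ℓ(X ∩ desc(v)); and (b) for every z ∉ X with par z ∈ X and every subtree Z rooted at z, ∑_{u∈Z} w u ≤ ℓ(Z). -/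
open scoped Classical

/-- In a service subtree (rooted at the fixed point `r`), all ancestors of a member are members. -/
lemma up_mem {V : Type*} [DecidableEq V] {r : V} {par : V → V} (hroot : par r = r)
    {S : Finset V} (hS : IsSubtree par r S) :
    ∀ (k : ℕ) (u : V), u ∈ S → par^[k] u ∈ S := by
  intro k
  induction k with
  | zero => intro u hu; simpa using hu
  | succ k ih =>
    intro u hu
    rw [Function.iterate_succ_apply]
    by_cases h : u = r
    · have hpu : par u ∈ S := by rw [h, hroot]; exact hS.1
      exact ih _ hpu
    · exact ih _ (hS.2.2 u hu h)

/-- Decomposition of `A \ B` into the subtrees of `A` hanging off `B`. -/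
lemma decomp {V : Type*} [Fintype V] [DecidableEq V]
    (r : V) (par : V → V) (hroot : par r = r) (hreach : ∀ v, ∃ n : ℕ, par^[n] v = r)
    (A B : Finset V) (hA : IsSubtree par r A) (hB : IsSubtree par r B) :
    ∃ T : Finset V,
      (∀ z ∈ T, z ∈ A ∧ z ∉ B ∧ par z ∈ B ∧
        IsSubtree par z (A.filter (fun u => IsDesc par u z))) ∧
      ∀ g : V → ℝ, ∑ u ∈ A \ B, g u =
        ∑ z ∈ T, ∑ u ∈ A.filter (fun u => IsDesc par u z), g u := by
  classical
  have H : ∀ u : V, ∃ n, par^[n] u ∈ B := by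
    intro u; obtain ⟨n, hn⟩ := hreach u; exact ⟨n, by rw [hn]; exact hB.1⟩
  set f : V → V := fun u => par^[Nat.find (H u) - 1] u with hf
  -- basic facts about the first-hit map
  have fact1 : ∀ u, u ∉ B → f u ∉ B ∧ par (f u) ∈ B ∧ IsDesc par u (f u) := by
    intro u hu
    have hn0 : Nat.find (H u) ≠ 0 := by
      intro h0
      have := Nat.find_spec (H u)
      rw [h0] at this; simpa using absurd this hu
    have hpos : 0 < Nat.find (H u) := Nat.pos_of_ne_zero hn0
    refine ⟨?_, ?_, ⟨Nat.find (H u) - 1, rfl⟩⟩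
    · exact Nat.find_min (H u) (Nat.sub_lt hpos one_pos)
    · have h1 : par (par^[Nat.find (H u) - 1] u) = par^[(Nat.find (H u) - 1) + 1] u :=
        (Function.iterate_succ_apply' par _ u).symm
      have h2 : (Nat.find (H u) - 1) + 1 = Nat.find (H u) := Nat.succ_pred_eq_of_pos hpos
      show par (par^[Nat.find (H u) - 1] u) ∈ B
      rw [h1, h2]; exact Nat.find_spec (H u)
  have fact2 : ∀ z, z ∉ B → par z ∈ B → ∀ u, u ∈ A →
      ((u ∉ B ∧ f u = z) ↔ IsDesc par u z) := by
    intro z hzB hpz u _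
    constructor
    · rintro ⟨huB, hfu⟩
      have := (fact1 u huB).2.2
      rwa [hfu] at this
    · rintro ⟨k, hk⟩
      have sub : ∀ j ≤ k, par^[j] u ∉ B := by
        intro j hj hmem
        have h1 : par^[k - j] (par^[j] u) ∈ B := up_mem hroot hB (k - j) _ hmem
        rw [← Function.iterate_add_apply, Nat.sub_add_cancel hj, hk] at h1
        exact hzB h1
      have huB : u ∉ B := by simpa using sub 0 (Nat.zero_le k)
      have hk1 : par^[k + 1] u ∈ B := by
        rw [Function.iterate_succ_apply', hk]; exact hpz
      have hfind : Nat.find (H u) = k + 1 := by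
        rw [Nat.find_eq_iff]
        exact ⟨hk1, fun j hj => sub j (Nat.lt_succ_iff.mp hj)⟩
      refine ⟨huB, ?_⟩
      show par^[Nat.find (H u) - 1] u = z
      rw [hfind]; simpa using hk
  refine ⟨(A \ B).image f, ?_, ?_⟩
  · intro z hz
    obtain ⟨u, hu, rfl⟩ := Finset.mem_image.mp hz
    rw [Finset.mem_sdiff] at hu
    obtain ⟨hfB, hpfB, hdesc⟩ := fact1 u hu.2
    have hfA : f u ∈ A := by
      obtain ⟨m, hm⟩ := hdesc
      rw [← hm]; exact up_mem hroot hA m u hu.1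
    refine ⟨hfA, hfB, hpfB, ?_, ?_, ?_⟩
    · exact Finset.mem_filter.mpr ⟨hfA, ⟨0, rfl⟩⟩
    · intro x hx; exact (Finset.mem_filter.mp hx).2
    · intro x hx hne
      obtain ⟨hxA, k, hk⟩ := Finset.mem_filter.mp hx
      have hk0 : k ≠ 0 := by
        intro h0; apply hne; rw [h0] at hk; simpa using hk
      have hxr : x ≠ r := by
        intro h0
        rw [h0, Function.iterate_fixed hroot] at hk
        exact hfB (hk ▸ hB.1)
      refine Finset.mem_filter.mpr ⟨hA.2.2 x hxA hxr, k - 1, ?_⟩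
      have hk' : (k - 1).succ = k := by omega
      rw [← Function.iterate_succ_apply, hk']
      exact hk
  · intro g
    have hmaps : ∀ u ∈ A \ B, f u ∈ (A \ B).image f := fun u hu =>
      Finset.mem_image_of_mem f hu
    rw [← Finset.sum_fiberwise_of_maps_to hmaps g]
    refine Finset.sum_congr rfl fun z hz => ?_
    obtain ⟨u0, hu0, rfl⟩ := Finset.mem_image.mp hz
    rw [Finset.mem_sdiff] at hu0
    obtain ⟨hfB, hpfB, _⟩ := fact1 u0 hu0.2
    refine Finset.sum_congr ?_ fun _ _ => rfl
    ext u
    simp only [Finset.mem_filter, Finset.mem_sdiff]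
    constructor
    · rintro ⟨⟨huA, huB⟩, hfu⟩
      exact ⟨huA, (fact2 _ hfB hpfB u huA).mp ⟨huB, hfu⟩⟩
    · rintro ⟨huA, hdesc⟩
      obtain ⟨huB, hfu⟩ := (fact2 _ hfB hpfB u huA).mpr hdesc
      exact ⟨⟨huA, huB⟩, hfu⟩

/-- Characterization of optimal single-phase services (the paper's Lemma on
optimal schedules for Single-Phase MLAP): a service subtree `X` minimizes
`cost(X) = ℓ(X) + ∑_{u∉X} w u` over all service subtrees if and only if
(a) every induced subtree `X ∩ desc(v)`, `v ∈ X`, is mature, and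
(b) every subtree hanging off `X` is not over-mature. -/
theorem stmt4 {V : Type*} [Fintype V] [DecidableEq V]
    (r : V) (par : V → V) (hroot : par r = r) (hreach : ∀ v, ∃ n : ℕ, par^[n] v = r)
    (ℓ : V → ℝ) (hℓr : ℓ r = 0) (hℓ : ∀ u, 0 ≤ ℓ u)
    (w : V → ℝ) (hw : ∀ u, 0 ≤ w u)
    (X : Finset V) (hX : IsSubtree par r X) :
    (∀ Y : Finset V, IsSubtree par r Y →
        ∑ u ∈ X, ℓ u + ∑ u ∈ Xᶜ, w u ≤ ∑ u ∈ Y, ℓ u + ∑ u ∈ Yᶜ, w u) ↔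
      ((∀ v ∈ X, ∑ u ∈ X.filter (fun u => IsDesc par u v), ℓ u ≤
          ∑ u ∈ X.filter (fun u => IsDesc par u v), w u) ∧
       (∀ z, z ∉ X → par z ∈ X → ∀ Z : Finset V, IsSubtree par z Z →
          ∑ u ∈ Z, w u ≤ ∑ u ∈ Z, ℓ u)) := by
  classical
  have key : ∀ S T : Finset V,
      (∑ u ∈ S, ℓ u + ∑ u ∈ Sᶜ, w u ≤ ∑ u ∈ T, ℓ u + ∑ u ∈ Tᶜ, w u) ↔
      (∑ u ∈ S, ℓ u - ∑ u ∈ S, w u ≤ ∑ u ∈ T, ℓ u - ∑ u ∈ T, w u) := by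
    intro S T
    have hS := Finset.sum_compl_add_sum S w
    have hT := Finset.sum_compl_add_sum T w
    constructor <;> intro h <;> linarith
  constructor
  · intro hopt
    constructor
    · -- (a)
      intro v hv
      by_cases hr : v = r
      · have hDX : X.filter (fun u => IsDesc par u v) = X :=
          Finset.filter_eq_self.mpr fun u _ => by rw [hr]; exact hreach u
        have hY : IsSubtree par r ({r} : Finset V) := by
          refine ⟨Finset.mem_singleton_self r, ?_, ?_⟩
          · intro u hu; rw [Finset.mem_singleton] at hu; exact ⟨0, hu⟩
          · intro u hu hne; exact absurd (Finset.mem_singleton.mp hu) hne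
        have h := (key X {r}).mp (hopt {r} hY)
        rw [Finset.sum_singleton, Finset.sum_singleton] at h
        rw [hDX]
        have := hw r
        linarith
      · set D := X.filter (fun u => IsDesc par u v) with hD
        set Y := X \ D with hYdef
        have hrD : r ∉ D := by
          intro hrd
          obtain ⟨_, n, hn⟩ := Finset.mem_filter.mp hrd
          rw [Function.iterate_fixed hroot] at hn
          exact hr hn.symm
        have hY : IsSubtree par r Y := by
          refine ⟨Finset.mem_sdiff.mpr ⟨hX.1, hrD⟩, ?_, ?_⟩
          · intro u hu; exact hX.2.1 u (Finset.mem_sdiff.mp hu).1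
          · intro u hu hne
            obtain ⟨huX, huD⟩ := Finset.mem_sdiff.mp hu
            have hpuX : par u ∈ X := hX.2.2 u huX hne
            refine Finset.mem_sdiff.mpr ⟨hpuX, fun hpd => huD ?_⟩
            obtain ⟨_, k, hk⟩ := Finset.mem_filter.mp hpd
            exact Finset.mem_filter.mpr ⟨huX, k + 1, by
              rw [Function.iterate_succ_apply]; exact hk⟩
        have h := (key X Y).mp (hopt Y hY)
        have hDsub : D ⊆ X := Finset.filter_subset _ _
        have e1 := Finset.sum_sdiff hDsub (f := ℓ)
        have e2 := Finset.sum_sdiff hDsub (f := w)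
        rw [← hYdef] at e1 e2
        linarith
    · -- (b)
      intro z hzX hpz Z hZ
      have hdisj : Disjoint X Z := by
        rw [Finset.disjoint_left]
        intro u huX huZ
        obtain ⟨k, hk⟩ := hZ.2.1 u huZ
        exact hzX (hk ▸ up_mem hroot hX k u huX)
      have hY : IsSubtree par r (X ∪ Z) := by
        refine ⟨Finset.mem_union_left _ hX.1, ?_, ?_⟩
        · intro u hu
          rcases Finset.mem_union.mp hu with h | h
          · exact hX.2.1 u h
          · obtain ⟨k, hk⟩ := hZ.2.1 u h
            obtain ⟨m, hm⟩ := hreach z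
            exact ⟨m + k, by rw [Function.iterate_add_apply, hk, hm]⟩
        · intro u hu hne
          rcases Finset.mem_union.mp hu with h | h
          · exact Finset.mem_union_left _ (hX.2.2 u h hne)
          · by_cases hz : u = z
            · subst hz; exact Finset.mem_union_left _ hpz
            · exact Finset.mem_union_right _ (hZ.2.2 u h hz)
      have h := (key X (X ∪ Z)).mp (hopt _ hY)
      rw [Finset.sum_union hdisj, Finset.sum_union hdisj] at h
      linarith
  · rintro ⟨ha, hb⟩ Y hY
    rw [key]
    obtain ⟨T, hT, hsum⟩ := decomp r par hroot hreach X Y hX hY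
    have c2 : ∑ u ∈ X \ Y, ℓ u ≤ ∑ u ∈ X \ Y, w u := by
      rw [hsum ℓ, hsum w]
      exact Finset.sum_le_sum fun z hz => ha z (hT z hz).1
    obtain ⟨T', hT', hsum'⟩ := decomp r par hroot hreach Y X hY hX
    have c1 : ∑ u ∈ Y \ X, w u ≤ ∑ u ∈ Y \ X, ℓ u := by
      rw [hsum' ℓ, hsum' w]
      refine Finset.sum_le_sum fun z hz => ?_
      obtain ⟨hzY, hzX, hpz, hsub⟩ := hT' z hz
      exact hb z hzX hpz _ hsub
    have e1 := Finset.sum_inter_add_sum_sdiff X Y ℓ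
    have e2 := Finset.sum_inter_add_sum_sdiff X Y w
    have e3 := Finset.sum_inter_add_sum_sdiff Y X ℓ
    have e4 := Finset.sum_inter_add_sum_sdiff Y X w
    rw [Finset.inter_comm] at e3 e4
    linarith
end

section
/- Let (V, r, par) be a finite rooted tree and ℓ, w : V → ℝ. If X and Y are covered service subtrees (with respect to w), then X ∪ Y is a covered service subtree. -/
open scoped Classical

/-- `Z` is a covered subtree rooted at `z` (with respect to the waiting costs `w`):
it is a subtree rooted at `z` and every proper induced subtree `Z ∩ desc(x)`,
`x ∈ Z`, `x ≠ z`, is mature, i.e. its waiting cost is at least its weight. -/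
def Covered {V : Type*} [Fintype V] [DecidableEq V] (par : V → V) (ℓ w : V → ℝ)
    (z : V) (Z : Finset V) : Prop :=
  IsSubtree par z Z ∧ ∀ x ∈ Z, x ≠ z →
    ∑ u ∈ Z.filter (fun u => IsDesc par u x), ℓ u ≤
      ∑ u ∈ Z.filter (fun u => IsDesc par u x), w u

lemma isDesc_trans {V : Type*} {par : V → V} {u v x : V}
    (h1 : IsDesc par u v) (h2 : IsDesc par v x) : IsDesc par u x := by
  obtain ⟨n, hn⟩ := h1
  obtain ⟨m, hm⟩ := h2
  exact ⟨m + n, by rw [Function.iterate_add_apply, hn, hm]⟩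

lemma iter_mem {V : Type*} [DecidableEq V] {r : V} {par : V → V} (hroot : par r = r)
    {Z : Finset V} (hZ : IsSubtree par r Z) {u : V} (hu : u ∈ Z) (k : ℕ) :
    par^[k] u ∈ Z := by
  induction k with
  | zero => exact hu
  | succ k ih =>
      rw [Function.iterate_succ_apply']
      by_cases h : par^[k] u = r
      · rw [h, hroot]; exact hZ.1
      · exact hZ.2.2 _ ih h

lemma mem_of_desc {V : Type*} [DecidableEq V] {r : V} {par : V → V} (hroot : par r = r)
    {Z : Finset V} (hZ : IsSubtree par r Z) {u t : V} (hu : u ∈ Z)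
    (h : IsDesc par u t) : t ∈ Z := by
  obtain ⟨k, hk⟩ := h
  exact hk ▸ iter_mem hroot hZ hu k

lemma root_not_desc {V : Type*} {r : V} {par : V → V} (hroot : par r = r)
    {x : V} (hx : x ≠ r) : ¬ IsDesc par r x := by
  rintro ⟨n, hn⟩
  rw [Function.iterate_fixed hroot] at hn
  exact hx hn.symm

/-- Key lemma: the maturity inequality at a node `x ∈ X`, `x ≠ r`, for the union. -/
lemma key {V : Type*} [Fintype V] [DecidableEq V]
    (r : V) (par : V → V) (hroot : par r = r)
    (ℓ w : V → ℝ) (X Y : Finset V)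
    (hX : Covered par ℓ w r X) (hY : Covered par ℓ w r Y)
    (x : V) (hxX : x ∈ X) (hxr : x ≠ r) :
    ∑ u ∈ (X ∪ Y).filter (fun u => IsDesc par u x), ℓ u ≤
      ∑ u ∈ (X ∪ Y).filter (fun u => IsDesc par u x), w u := by
  classical
  set A : Finset V := X.filter (fun u => IsDesc par u x) with hA
  set T : Finset V := Y.filter (fun t => IsDesc par t x ∧ t ∉ X ∧ par t ∈ X) with hT
  set B : Finset V := T.biUnion (fun t => Y.filter (fun u => IsDesc par u t)) with hB
  -- nodes of B are not in X
  have hBX : ∀ u ∈ B, u ∉ X := by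
    intro u hu
    rw [hB, Finset.mem_biUnion] at hu
    obtain ⟨t, htT, hut⟩ := hu
    rw [hT, Finset.mem_filter] at htT
    rw [Finset.mem_filter] at hut
    intro huX
    exact htT.2.2.1 (mem_of_desc hroot hX.1 huX hut.2)
  -- T-pieces of B are descendants of x
  have hTx : ∀ t ∈ T, IsDesc par t x := by
    intro t ht; rw [hT, Finset.mem_filter] at ht; exact ht.2.1
  have hTr : ∀ t ∈ T, t ≠ r := by
    intro t ht heq
    exact root_not_desc hroot hxr (heq ▸ hTx t ht)
  -- decomposition
  have hdecomp : (X ∪ Y).filter (fun u => IsDesc par u x) = A ∪ B := by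
    ext u
    simp only [Finset.mem_filter, Finset.mem_union, hA, hB, Finset.mem_biUnion]
    constructor
    · rintro ⟨huXY, hux⟩
      by_cases huX : u ∈ X
      · exact Or.inl ⟨huX, hux⟩
      · have huY : u ∈ Y := huXY.resolve_left huX
        obtain ⟨n, hn⟩ := hux
        have hex : ∃ m, par^[m] u ∈ X := ⟨n, hn ▸ hxX⟩
        right
        set m := Nat.find hex with hm
        have hmX : par^[m] u ∈ X := Nat.find_spec hex
        have hmpos : 0 < m := by
          rcases Nat.eq_zero_or_pos m with h0 | h; · exact absurd (by simpa [h0] using hmX) huX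
          · exact h
        set t := par^[m - 1] u with ht'
        have hpt : par t = par^[m] u := by
          conv_rhs => rw [show m = (m - 1) + 1 by omega]
          rw [Function.iterate_succ_apply', ht']
        have htnX : t ∉ X := Nat.find_min hex (by omega)
        have hmn : m ≤ n := Nat.find_min' hex (hn ▸ hxX)
        have htY : t ∈ Y := iter_mem hroot hY.1 huY (m - 1)
        have htx : IsDesc par t x := by
          refine ⟨n - (m - 1), ?_⟩
          rw [ht', ← Function.iterate_add_apply]
          rw [show n - (m - 1) + (m - 1) = n by omega, hn]
        refine ⟨t, ?_, huY, ⟨m - 1, rfl⟩⟩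
        rw [hT, Finset.mem_filter]
        exact ⟨htY, htx, htnX, hpt ▸ hmX⟩
    · rintro (⟨huX, hux⟩ | ⟨t, htT, hut⟩)
      · exact ⟨Or.inl huX, hux⟩
      · have h' := htT
        rw [hT, Finset.mem_filter] at h'
        exact ⟨Or.inr hut.1, isDesc_trans hut.2 h'.2.1⟩
  have hAB : Disjoint A B := by
    rw [Finset.disjoint_left]
    intro u huA huB
    rw [hA, Finset.mem_filter] at huA
    exact hBX u huB huA.1
  -- pairwise disjointness of T-pieces
  have hpair : ∀ t1 ∈ T, ∀ t2 ∈ T, t1 ≠ t2 →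
      Disjoint (Y.filter (fun u => IsDesc par u t1)) (Y.filter (fun u => IsDesc par u t2)) := by
    have hcomp : ∀ t1 ∈ T, ∀ t2 ∈ T, t1 ≠ t2 → ¬ IsDesc par t1 t2 := by
      intro t1 ht1 t2 ht2 hne ⟨k, hk⟩
      have hk0 : k ≠ 0 := by rintro rfl; exact hne hk
      rw [hT, Finset.mem_filter] at ht1 ht2
      have : par^[k - 1] (par t1) ∈ X := iter_mem hroot hX.1 ht1.2.2.2 (k - 1)
      rw [← Function.iterate_succ_apply, show (k - 1).succ = k from by omega, hk] at this
      exact ht2.2.2.1 this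
    intro t1 ht1 t2 ht2 hne
    rw [Finset.disjoint_left]
    intro u hu1 hu2
    rw [Finset.mem_filter] at hu1 hu2
    obtain ⟨n1, h1⟩ := hu1.2
    obtain ⟨n2, h2⟩ := hu2.2
    rcases le_total n1 n2 with h | h
    · exact hcomp t1 ht1 t2 ht2 hne ⟨n2 - n1, by rw [← h1, ← Function.iterate_add_apply,
        show n2 - n1 + n1 = n2 by omega, h2]⟩
    · exact hcomp t2 ht2 t1 ht1 hne.symm ⟨n1 - n2, by rw [← h2, ← Function.iterate_add_apply,
        show n1 - n2 + n2 = n1 by omega, h1]⟩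
  have hsum : ∀ f : V → ℝ,
      ∑ u ∈ (X ∪ Y).filter (fun u => IsDesc par u x), f u =
        ∑ u ∈ A, f u + ∑ t ∈ T, ∑ u ∈ Y.filter (fun u => IsDesc par u t), f u := by
    intro f
    rw [hdecomp, Finset.sum_union hAB, hB, Finset.sum_biUnion]
    exact fun t1 ht1 t2 ht2 hne => hpair t1 ht1 t2 ht2 hne
  rw [hsum ℓ, hsum w]
  have h1 : ∑ u ∈ A, ℓ u ≤ ∑ u ∈ A, w u := hX.2 x hxX hxr
  have h2 : ∑ t ∈ T, ∑ u ∈ Y.filter (fun u => IsDesc par u t), ℓ u ≤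
      ∑ t ∈ T, ∑ u ∈ Y.filter (fun u => IsDesc par u t), w u := by
    refine Finset.sum_le_sum fun t ht => ?_
    have htY : t ∈ Y := (Finset.mem_filter.1 (hT ▸ ht)).1
    exact hY.2 t htY (hTr t ht)
  linarith

/-- Lemma `Ot unique`: the union of two covered service subtrees is a covered
service subtree. -/
theorem stmt5 {V : Type*} [Fintype V] [DecidableEq V]
    (r : V) (par : V → V) (hroot : par r = r) (hreach : ∀ v, ∃ n : ℕ, par^[n] v = r)
    (ℓ w : V → ℝ)
    (X Y : Finset V) (hX : Covered par ℓ w r X) (hY : Covered par ℓ w r Y) :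
    Covered par ℓ w r (X ∪ Y) := by
  constructor
  · refine ⟨Finset.mem_union_left _ hX.1.1, fun u _ => hreach u, ?_⟩
    intro u hu hur
    rcases Finset.mem_union.1 hu with h | h
    · exact Finset.mem_union_left _ (hX.1.2.2 u h hur)
    · exact Finset.mem_union_right _ (hY.1.2.2 u h hur)
  · intro x hx hxr
    rcases Finset.mem_union.1 hx with h | h
    · exact key r par hroot ℓ w X Y hX hY x h hxr
    · rw [Finset.union_comm]
      exact key r par hroot ℓ w Y X hY hX x h hxr
end

section
/- Let (V, r, par) be a finite rooted tree, ℓ : V → ℝ, and w : V → ℝ → ℝ such that w u is nondecreasing for every u ∈ V. For t ∈ ℝ let O(t) be the inclusion-maximal service subtree that is covered with respect to the function u ↦ w u t. Then for all s ≤ t, O(s) ⊆ O(t). -/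
open scoped Classical

/-- Corollary `optima-grow`: if the waiting cost of each node is nondecreasing in time,
then the inclusion-maximal covered service subtree `O(t)` grows with `t`:
for `s ≤ t`, `O(s) ⊆ O(t)`. -/
theorem stmt8 {V : Type*} [Fintype V] [DecidableEq V]
    (r : V) (par : V → V) (hroot : par r = r) (hreach : ∀ v, ∃ n : ℕ, par^[n] v = r)
    (ℓ : V → ℝ) (w : V → ℝ → ℝ) (hw : ∀ u, Monotone (w u))
    (s t : ℝ) (hst : s ≤ t) (Os Ot : Finset V)
    (hOs : Covered par ℓ (fun u => w u s) r Os)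
    (hOsmax : ∀ Z, Covered par ℓ (fun u => w u s) r Z → Z ⊆ Os)
    (hOt : Covered par ℓ (fun u => w u t) r Ot)
    (hOtmax : ∀ Z, Covered par ℓ (fun u => w u t) r Z → Z ⊆ Ot) :
    Os ⊆ Ot := by
  exact hOtmax Os ⟨hOs.1, fun x hx hxr =>
    (hOs.2 x hx hxr).trans (Finset.sum_le_sum fun u _ => hw u hst)⟩
end

section
/- Let R be a finite set of requests, each a triple (p, a, d) ∈ ℝ≥0 × ℝ≥0 × ℝ≥0 with a ≤ d (position on the half-line [0,∞), arrival time, deadline). Let m ∈ ℕ, let t_1 < t_2 < ⋯ < t_m be real times and x_1, …, x_m ≥ 0 real positions, and suppose for each j ∈ {1,…,m} there is a request (x_j, a_j, t_j) ∈ R with a_j ≤ t_j such that for every i < j, either t_i < a_j or 2·x_i < x_j (the request triggering the j-th service is still pending: no earlier service delivered from a point ≥ x_j at or after its arrival). Let O be a finite set of pairs (y, s) ∈ ℝ≥0 × ℝ≥0 such that for each j ∈ {1,…,m} there exists (y, s) ∈ O with a_j ≤ s ≤ t_j and y ≥ x_j. Then ∑_{j=1}^{m} 2·x_j ≤ 4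 · ∑_{(y,s)∈O} y. -/
/-- Sum of a doubling sequence is at most twice its max element. -/
lemma doubling_sum (x : ℕ → ℝ) (S : Finset ℕ) (hpos : ∀ j ∈ S, 0 ≤ x j)
    (hd : ∀ i ∈ S, ∀ j ∈ S, i < j → 2 * x i < x j) (hS : S.Nonempty) :
    ∑ j ∈ S, x j ≤ 2 * x (S.max' hS) := by
  induction S using Finset.strongInduction with
  | _ S ih =>
    set M := S.max' hS with hM
    have hMmem : M ∈ S := S.max'_mem hS
    have hins : S = insert M (S.erase M) := (Finset.insert_erase hMmem).symm
    rcases (S.erase M).eq_empty_or_nonempty with he | hne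
    · have : S = {M} := by
        rw [hins, he]; simp
      rw [this, Finset.sum_singleton]
      nlinarith [hpos M hMmem]
    · have hss : S.erase M ⊂ S := Finset.erase_ssubset hMmem
      have ihh := ih (S.erase M) hss (fun j hj => hpos j (Finset.mem_of_mem_erase hj))
        (fun i hi j hj hij => hd i (Finset.mem_of_mem_erase hi) j (Finset.mem_of_mem_erase hj) hij)
        hne
      set M' := (S.erase M).max' hne with hM'
      have hM'mem : M' ∈ S.erase M := (S.erase M).max'_mem hne
      have hM'lt : M' < M :=
        lt_of_le_of_ne (S.le_max' M' (Finset.mem_of_mem_erase hM'mem))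
          (Finset.ne_of_mem_erase hM'mem)
      have hdbl : 2 * x M' < x M := hd M' (Finset.mem_of_mem_erase hM'mem) M hMmem hM'lt
      have hsum : ∑ j ∈ S, x j = x M + ∑ j ∈ S.erase M, x j :=
        (Finset.add_sum_erase S x hMmem).symm
      linarith

/-- Algorithm DLINE is `4`-competitive for MLAP-D on the line. `R` is the (finite) set
of requests `(p, a, d)` (position, arrival, deadline). The algorithm's schedule delivers
from `2 · x j` at time `t j`, where `(x j, a j, t j) ∈ R` is the triggering request,
which is still pending at time `t j`: for every earlier service `i < j`, either it
happened before the arrival (`t i < a j`) or it did not reach the request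
(`2 · x i < x j`). `O` is any schedule (set of services `(y, s)`, serving `[0, y]` at
time `s`) that serves every triggering request within its `[arrival, deadline]` window.
Then the algorithm's cost `∑ 2 · x j` is at most `4` times the cost `∑ y` of `O`. -/
theorem stmt10 (R : Finset (ℝ × ℝ × ℝ))
    (hR : ∀ p ∈ R, 0 ≤ p.1 ∧ 0 ≤ p.2.1 ∧ p.2.1 ≤ p.2.2)
    (m : ℕ) (t x a : ℕ → ℝ)
    (htmono : ∀ i j, 1 ≤ i → i < j → j ≤ m → t i < t j)
    (hx : ∀ j, 1 ≤ j → j ≤ m → 0 ≤ x j)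
    (hreq : ∀ j, 1 ≤ j → j ≤ m →
      (x j, a j, t j) ∈ R ∧ a j ≤ t j ∧
        ∀ i, 1 ≤ i → i < j → (t i < a j ∨ 2 * x i < x j))
    (O : Finset (ℝ × ℝ)) (hO : ∀ p ∈ O, 0 ≤ p.1 ∧ 0 ≤ p.2)
    (hserve : ∀ j, 1 ≤ j → j ≤ m → ∃ p ∈ O, a j ≤ p.2 ∧ p.2 ≤ t j ∧ x j ≤ p.1) :
    ∑ j ∈ Finset.Icc 1 m, 2 * x j ≤ 4 * ∑ p ∈ O, p.1 := by
  classical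
  choose f hfO hfa hfs hfx using hserve
  set g : ℕ → ℝ × ℝ := fun j => if h : 1 ≤ j ∧ j ≤ m then f j h.1 h.2 else (0, 0) with hg
  have hgdef : ∀ j (h1 : 1 ≤ j) (h2 : j ≤ m), g j = f j h1 h2 := by
    intro j h1 h2
    simp [hg, h1, h2]
  have hmap : ∀ j ∈ Finset.Icc 1 m, g j ∈ O := by
    intro j hj
    rw [Finset.mem_Icc] at hj
    rw [hgdef j hj.1 hj.2]
    exact hfO j hj.1 hj.2
  rw [← Finset.sum_fiberwise_of_maps_to hmap (fun j => 2 * x j), Finset.mul_sum]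
  apply Finset.sum_le_sum
  intro p hp
  set S := (Finset.Icc 1 m).filter (fun j => g j = p) with hSdef
  have hmem : ∀ j ∈ S, 1 ≤ j ∧ j ≤ m ∧ g j = p := by
    intro j hj
    rw [hSdef, Finset.mem_filter, Finset.mem_Icc] at hj
    exact ⟨hj.1.1, hj.1.2, hj.2⟩
  have hprops : ∀ j ∈ S, a j ≤ p.2 ∧ p.2 ≤ t j ∧ x j ≤ p.1 := by
    intro j hj
    obtain ⟨h1, h2, h3⟩ := hmem j hj
    rw [hgdef j h1 h2] at h3
    exact ⟨h3 ▸ hfa j h1 h2, h3 ▸ hfs j h1 h2, h3 ▸ hfx j h1 h2⟩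
  have hpos : ∀ j ∈ S, 0 ≤ x j := fun j hj => hx j (hmem j hj).1 (hmem j hj).2.1
  have hd : ∀ i ∈ S, ∀ j ∈ S, i < j → 2 * x i < x j := by
    intro i hi j hj hij
    obtain ⟨hi1, hi2, _⟩ := hmem i hi
    obtain ⟨hj1, hj2, _⟩ := hmem j hj
    rcases (hreq j hj1 hj2).2.2 i hi1 hij with h | h
    · exfalso
      have h1 := (hprops j hj).1
      have h2 := (hprops i hi).2.1
      linarith
    · exact h
  rcases S.eq_empty_or_nonempty with he | hne
  · rw [he, Finset.sum_empty]
    have := (hO p hp).1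
    linarith
  · have hM := doubling_sum x S hpos hd hne
    have hMx : x (S.max' hne) ≤ p.1 := (hprops _ (S.max'_mem hne)).2.2
    calc ∑ j ∈ S, 2 * x j = 2 * ∑ j ∈ S, x j := by rw [Finset.mul_sum]
      _ ≤ 2 * (2 * x (S.max' hne)) := by linarith
      _ ≤ 4 * p.1 := by linarith
end

section
/- For every real R < 4 there exists a positive integer B such that every finite sequence of integers 0 = x_0 < x_1 < x_2 < ⋯ < x_{m-1} < x_m = B (with m ≥ 1) has an index k with 1 ≤ k ≤ m and ∑_{i=0}^{k} x_i > R · (x_{k-1} + 1). -/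
lemma key_step (u s p q : ℝ) (hu1 : 3.5 ≤ u) (hu2 : u < 4)
    (hp : 1 ≤ p) (hq : p + 1 ≤ q) (hs : p ≤ s) (hc : s + q ≤ u * p) :
    (s + (4 - u) / 4 * p) * q ≤ (s + q) * p := by
  have hq0 : 0 < q := by linarith
  rcases le_or_gt s (u / 4 * p) with h | h
  · nlinarith [mul_nonneg hq0.le (sub_nonneg.mpr h),
      mul_nonneg (by linarith : (0:ℝ) ≤ s) (by linarith : (0:ℝ) ≤ p)]
  · have hqle : q ≤ u * p - s := by linarith
    have h1 : q * (u / 4 * p - s) ≥ (u * p - s) * (u / 4 * p - s) := by nlinarith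
    nlinarith [sq_nonneg (4 * s - (5 * u - 4) / 2 * p),
      mul_nonneg (mul_nonneg (by linarith : (0:ℝ) ≤ 4 - u) (by linarith : (0:ℝ) ≤ 9 * u - 4)) (sq_nonneg p)]

/-- The online bidding lemma (Lemma 6.2, from Chrobak et al.): for every `R < 4` there
is a positive integer `B` such that every increasing sequence of integers
`0 = x 0 < x 1 < ⋯ < x m = B` (with `m ≥ 1`) has an index `1 ≤ k ≤ m` with
`∑_{i=0}^{k} x i > R · (x (k-1) + 1)`. -/
theorem stmt11 (R : ℝ) (hR : R < 4) :
    ∃ B : ℕ, 0 < B ∧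
      ∀ (m : ℕ) (x : ℕ → ℤ), 1 ≤ m → x 0 = 0 → x m = B →
        (∀ i, i < m → x i < x (i + 1)) →
        ∃ k, 1 ≤ k ∧ k ≤ m ∧
          (∑ i ∈ Finset.range (k + 1), (x i : ℝ)) > R * ((x (k - 1) : ℝ) + 1) := by
  set Q : ℝ := max R 3 with hQdef
  have hQ3 : (3:ℝ) ≤ Q := le_max_right _ _
  have hQ4 : Q < 4 := max_lt hR (by norm_num)
  have hRQ : R ≤ Q := le_max_left _ _
  set ε : ℝ := 4 - Q with hεdef
  have hε : 0 < ε := by rw [hεdef]; linarith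
  have hε1 : ε ≤ 1 := by rw [hεdef]; linarith
  set K : ℕ := ⌈(8:ℝ)/ε⌉₊ with hKdef
  have hK8 : (8:ℝ) ≤ K := by
    calc (8:ℝ) ≤ 8 / ε := by rw [le_div_iff₀ hε]; nlinarith
    _ ≤ K := Nat.le_ceil _
  set M : ℕ := K + ⌈(24:ℝ)/ε⌉₊ + 1 with hMdef
  refine ⟨2 * 4 ^ M, by positivity, ?_⟩
  intro m x hm h0 hB hinc
  by_contra hcon
  push_neg at hcon
  -- x i ≥ i
  have hxi : ∀ i, i ≤ m → (i:ℤ) ≤ x i := by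
    intro i
    induction i with
    | zero => intro _; simp [h0]
    | succ n ih =>
      intro h
      have h1 := hinc n (by omega)
      have h2 := ih (by omega)
      push_cast
      omega
  have hx0 : ∀ i, i ≤ m → (0:ℝ) ≤ (x i : ℝ) := by
    intro i hi
    have := hxi i hi
    have : (0:ℤ) ≤ x i := le_trans (by positivity) this
    exact_mod_cast this
  obtain ⟨S, hSdef⟩ : ∃ S : ℕ → ℝ, S = fun k => ∑ i ∈ Finset.range (k+1), ((x i : ℝ)) := ⟨_, rfl⟩
  have hS0 : S 0 = 0 := by simp [hSdef, h0]
  have hSsucc : ∀ k, S (k+1) = S k + (x (k+1) : ℝ) := by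
    intro k; simp [hSdef, Finset.sum_range_succ]
  have hSx : ∀ k, k ≤ m → (x k : ℝ) ≤ S k := by
    intro k hk
    rw [hSdef]
    exact Finset.single_le_sum (f := fun i => (x i : ℝ))
      (fun i hi => hx0 i (le_trans (Nat.lt_succ_iff.mp (Finset.mem_range.mp hi)) hk))
      (Finset.mem_range.mpr (Nat.lt_succ_self k))
  -- the negated conclusion, weakened from R to Q
  have hScon : ∀ k, 1 ≤ k → k ≤ m → S k ≤ Q * ((x (k-1) : ℝ) + 1) := by
    intro k hk1 hk2
    have h1 := hcon k hk1 hk2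
    have h2 : (0:ℝ) ≤ (x (k-1) : ℝ) + 1 := by
      have := hx0 (k-1) (by omega); linarith
    rw [hSdef]
    calc (∑ i ∈ Finset.range (k+1), ((x i : ℝ))) ≤ R * ((x (k-1) : ℝ) + 1) := h1
      _ ≤ Q * ((x (k-1) : ℝ) + 1) := mul_le_mul_of_nonneg_right hRQ h2
  -- growth of σ_k = S k / x k
  have hgrow : ∀ k, K ≤ k → k ≤ m → 1 + ((k:ℝ) - (K:ℝ)) * (ε/8) ≤ S k / (x k : ℝ) := by
    intro k hKk
    induction k, hKk using Nat.le_induction with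
    | base =>
      intro hKm
      have hxK : (1:ℝ) ≤ (x K : ℝ) := by
        have h1 := hxi K hKm
        have h2 : (8:ℕ) ≤ K := by exact_mod_cast hK8
        have h3 : (1:ℤ) ≤ x K := by omega
        exact_mod_cast h3
      simp only [sub_self, zero_mul, add_zero]
      rw [le_div_iff₀ (by linarith)]
      have := hSx K hKm
      linarith
    | succ k hKk ih =>
      intro hk1m
      have hkm : k ≤ m := by omega
      have ihk := ih hkm
      -- apply key_step
      have hxkK : (K:ℝ) ≤ (x k : ℝ) := by
        have h1 := hxi k hkm
        have h2 : ((K:ℤ):ℝ) ≤ ((x k : ℤ):ℝ) := by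
          exact_mod_cast le_trans (by exact_mod_cast hKk) h1
        exact_mod_cast h2
      have hp1 : (1:ℝ) ≤ (x k : ℝ) := by linarith
      have hp0 : (0:ℝ) < (x k : ℝ) := by linarith
      have hq : (x k : ℝ) + 1 ≤ (x (k+1) : ℝ) := by
        have := hinc k (by omega)
        have : x k + 1 ≤ x (k+1) := by omega
        exact_mod_cast this
      have hq0 : (0:ℝ) < (x (k+1) : ℝ) := by linarith
      have hs : (x k : ℝ) ≤ S k := hSx k hkm
      set u : ℝ := (Q + 4) / 2 with hudef
      have hu1 : (3.5:ℝ) ≤ u := by rw [hudef]; linarith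
      have hu2 : u < 4 := by rw [hudef]; linarith
      have hc : S k + (x (k+1) : ℝ) ≤ u * (x k : ℝ) := by
        have h1 := hScon (k+1) (by omega) hk1m
        simp only [Nat.add_sub_cancel] at h1
        rw [hSsucc] at h1
        -- Q * (x k + 1) ≤ u * x k  since x k ≥ 8/ε
        have h2 : (8:ℝ)/ε ≤ (x k : ℝ) := le_trans (Nat.le_ceil _) hxkK
        have h3 : (8:ℝ) ≤ ε * (x k : ℝ) := (div_le_iff₀' hε).mp h2
        rw [hεdef] at h3
        rw [hudef]
        nlinarith [h1, h3]
      have hkey := key_step u (S k) (x k : ℝ) (x (k+1) : ℝ) hu1 hu2 hp1 hq hs hc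
      have hδ : (4 - u) / 4 = ε / 8 := by rw [hudef, hεdef]; ring
      rw [hδ] at hkey
      have hstep : S k / (x k : ℝ) + ε/8 ≤ S (k+1) / (x (k+1) : ℝ) := by
        rw [hSsucc]
        rw [div_add' _ _ _ (ne_of_gt hp0), div_le_div_iff₀ hp0 hq0]
        nlinarith [hkey]
      push_cast
      push_cast at ihk
      linarith
  -- upper bound on σ_m gives m ≤ M
  have hxm : (x m : ℝ) = (2 * 4 ^ M : ℕ) := by exact_mod_cast congrArg (Int.cast : ℤ → ℝ) hB
  have hxm0 : (0:ℝ) < (x m : ℝ) := by rw [hxm]; positivity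
  have hmM : m ≤ M := by
    by_contra hMm
    push_neg at hMm
    have h1 := hgrow m (by omega) le_rfl
    have h2 : S m ≤ Q * (x m : ℝ) := by
      have h3 := hScon m hm le_rfl
      have h4 : (x (m-1) : ℝ) + 1 ≤ (x m : ℝ) := by
        have h5 := hinc (m-1) (by omega)
        rw [Nat.sub_add_cancel hm] at h5
        have : x (m-1) + 1 ≤ x m := by omega
        exact_mod_cast this
      calc S m ≤ Q * ((x (m-1) : ℝ) + 1) := h3
        _ ≤ Q * (x m : ℝ) := mul_le_mul_of_nonneg_left h4 (by linarith)
    have h6 : S m / (x m : ℝ) ≤ Q := by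
      rw [div_le_iff₀ hxm0]; nlinarith [hx0 m le_rfl]
    -- m ≥ M + 1 = K + ⌈24/ε⌉ + 2, so (m - K) * ε/8 ≥ 3
    have h7 : (24:ℝ)/ε ≤ (m:ℝ) - (K:ℝ) := by
      have : (⌈(24:ℝ)/ε⌉₊ : ℝ) + 2 ≤ (m:ℝ) - (K:ℝ) := by
        have : K + ⌈(24:ℝ)/ε⌉₊ + 2 ≤ m := by omega
        have : ((K + ⌈(24:ℝ)/ε⌉₊ + 2 : ℕ) : ℝ) ≤ (m:ℝ) := by exact_mod_cast this
        push_cast at this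
        linarith
      have h8 := Nat.le_ceil ((24:ℝ)/ε)
      linarith
    have h9 : (3:ℝ) ≤ ((m:ℝ) - (K:ℝ)) * (ε/8) := by
      have := (div_le_iff₀ hε).mp h7
      nlinarith
    linarith [h1, h6, h9, hQ4]
  -- size bound: S k ≤ 2 * 4^k - 2
  have hsize : ∀ k, k ≤ m → S k ≤ 2 * 4^k - 2 := by
    intro k
    induction k with
    | zero => intro _; rw [hS0]; norm_num
    | succ n ih =>
      intro h
      have h1 := hScon (n+1) (by omega) h
      simp only [Nat.add_sub_cancel] at h1
      have h2 := hSx n (by omega)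
      have h3 := ih (by omega)
      have h4 : (0:ℝ) ≤ (x n : ℝ) := hx0 n (by omega)
      have h5 : (4:ℝ)^n ≥ 1 := one_le_pow₀ (by norm_num : (1:ℝ) ≤ 4)
      calc S (n+1) ≤ Q * ((x n : ℝ) + 1) := h1
        _ ≤ 4 * ((x n : ℝ) + 1) := mul_le_mul_of_nonneg_right (le_of_lt hQ4) (by linarith)
        _ ≤ 4 * (S n + 1) := by linarith
        _ ≤ 2 * 4^(n+1) - 2 := by rw [pow_succ]; linarith
  -- contradiction
  have hfin := hsize m le_rfl
  have hBS : ((2 * 4 ^ M : ℕ) : ℝ) ≤ S m := by rw [← hxm]; exact hSx m le_rfl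
  have hpow : (4:ℝ)^m ≤ 4^M := pow_le_pow_right₀ (by norm_num) hmM
  have hc2 : ((2 * 4 ^ M : ℕ) : ℝ) = 2 * 4^M := by push_cast; ring
  linarith [hfin, hBS, hpow, hc2]
end

section
/- For every real R < 4 there exists a positive integer B with the following property. For every finite set S ⊆ ℝ≥0 × ℝ≥0 such that for every integer x ∈ {1,…,B} there is (t, y) ∈ S with t ≤ x and y ≥ x, there exists a real θ with 1 ≤ θ such that ∑_{(t,y)∈S, t ≤ θ} y > R · ⌊min(θ, B)⌋. -/
open Finset

noncomputable def mlapCost (S : Finset (ℝ × ℝ)) (θ : ℝ) : ℝ :=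
  ∑ p ∈ S.filter (fun p => p.1 ≤ θ), p.2

noncomputable def mlapM (S : Finset (ℝ × ℝ)) (θ : ℝ) : ℝ :=
  ((S.filter (fun p => p.1 ≤ θ)).sup (fun p => p.2.toNNReal) : NNReal)

noncomputable def mlapTau (S : Finset (ℝ × ℝ)) : ℕ → ℕ
  | 0 => 1
  | k + 1 => ⌊mlapM S (mlapTau S k)⌋₊ + 1

noncomputable def mlapSum (S : Finset (ℝ × ℝ)) (k : ℕ) : ℝ :=
  ∑ i ∈ Finset.range (k + 1), mlapM S (mlapTau S i)

lemma mlapM_nonneg (S : Finset (ℝ × ℝ)) (θ : ℝ) : 0 ≤ mlapM S θ :=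
  NNReal.coe_nonneg _

lemma le_mlapM (S : Finset (ℝ × ℝ)) (θ : ℝ) {p : ℝ × ℝ} (hp : p ∈ S)
    (h2 : 0 ≤ p.2) (ht : p.1 ≤ θ) : p.2 ≤ mlapM S θ := by
  have h : p.2.toNNReal ≤ (S.filter (fun p => p.1 ≤ θ)).sup (fun p => p.2.toNNReal) :=
    Finset.le_sup (f := fun p : ℝ × ℝ => p.2.toNNReal) (Finset.mem_filter.mpr ⟨hp, ht⟩)
  calc p.2 = (p.2.toNNReal : ℝ) := (Real.coe_toNNReal _ h2).symm
    _ ≤ _ := NNReal.coe_le_coe.mpr h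

lemma mlapM_le_cost (S : Finset (ℝ × ℝ)) (θ : ℝ)
    (hpos : ∀ p ∈ S, 0 ≤ p.1 ∧ 0 ≤ p.2) : mlapM S θ ≤ mlapCost S θ := by
  rcases (S.filter (fun p => p.1 ≤ θ)).eq_empty_or_nonempty with he | hne
  · unfold mlapM mlapCost
    rw [he]
    simp
  · obtain ⟨p, hp, hs⟩ := Finset.exists_mem_eq_sup _ hne (fun p : ℝ × ℝ => p.2.toNNReal)
    have hpS : p ∈ S := (Finset.mem_filter.mp hp).1
    have hM : mlapM S θ = p.2 := by
      unfold mlapM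
      rw [hs]
      exact Real.coe_toNNReal _ (hpos p hpS).2
    rw [hM]
    exact Finset.single_le_sum
      (fun q hq => (hpos q (Finset.mem_filter.mp hq).1).2) hp

lemma mlapM_attained (S : Finset (ℝ × ℝ)) (θ : ℝ) (h : 0 < mlapM S θ) :
    ∃ p ∈ S, p.1 ≤ θ ∧ p.2 = mlapM S θ := by
  rcases (S.filter (fun p => p.1 ≤ θ)).eq_empty_or_nonempty with he | hne
  · exfalso
    unfold mlapM at h
    rw [he] at h
    simp at h
  · obtain ⟨p, hp, hs⟩ := Finset.exists_mem_eq_sup _ hne (fun p : ℝ × ℝ => p.2.toNNReal)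
    rw [Finset.mem_filter] at hp
    refine ⟨p, hp.1, hp.2, ?_⟩
    have hM : mlapM S θ = max p.2 0 := by
      unfold mlapM
      rw [hs]
      exact Real.coe_toNNReal' _
    rcases le_or_gt 0 p.2 with h2 | h2
    · rw [hM, max_eq_left h2]
    · exfalso
      rw [hM, max_eq_right h2.le] at h
      exact lt_irrefl _ h

lemma mlapTau_pos (S : Finset (ℝ × ℝ)) (k : ℕ) : 1 ≤ mlapTau S k := by
  cases k with
  | zero => simp [mlapTau]
  | succ n => simp [mlapTau]

lemma mlapTau_succ_le (S : Finset (ℝ × ℝ)) (k : ℕ) :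
    (mlapTau S (k + 1) : ℝ) ≤ mlapM S (mlapTau S k) + 1 := by
  have h : mlapTau S (k + 1) = ⌊mlapM S (mlapTau S k)⌋₊ + 1 := rfl
  rw [h]
  push_cast
  have := Nat.floor_le (mlapM_nonneg S (mlapTau S k))
  linarith

lemma mlapM_lt_tau_succ (S : Finset (ℝ × ℝ)) (k : ℕ) :
    mlapM S (mlapTau S k) < (mlapTau S (k + 1) : ℝ) := by
  have h : mlapTau S (k + 1) = ⌊mlapM S (mlapTau S k)⌋₊ + 1 := rfl
  rw [h]
  push_cast
  exact Nat.lt_floor_add_one _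

lemma mlapSum_succ (S : Finset (ℝ × ℝ)) (k : ℕ) :
    mlapSum S (k + 1) = mlapSum S k + mlapM S (mlapTau S (k + 1)) :=
  Finset.sum_range_succ _ (k + 1)

lemma mlapM_le_mlapSum (S : Finset (ℝ × ℝ)) (k : ℕ) :
    mlapM S (mlapTau S k) ≤ mlapSum S k :=
  Finset.single_le_sum (fun i _ => mlapM_nonneg S (mlapTau S i))
    (Finset.self_mem_range_succ k)

theorem stmt12_aux (R : ℝ) (h2R : 2 ≤ R) (hR : R < 4) :
    ∃ B : ℕ, 0 < B ∧
      ∀ S : Finset (ℝ × ℝ),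
        (∀ p ∈ S, 0 ≤ p.1 ∧ 0 ≤ p.2) →
        (∀ x : ℕ, 1 ≤ x → x ≤ B → ∃ p ∈ S, p.1 ≤ (x : ℝ) ∧ (x : ℝ) ≤ p.2) →
        ∃ θ : ℝ, 1 ≤ θ ∧
          (∑ p ∈ S.filter (fun p => p.1 ≤ θ), p.2) > R * (⌊min θ (B : ℝ)⌋ : ℝ) := by
  have hR0 : (0 : ℝ) ≤ R := by linarith
  set R' : ℝ := (R + 4) / 2 with hR'def
  have hR'3 : 3 ≤ R' := by rw [hR'def]; linarith
  have hR'4 : R' < 4 := by rw [hR'def]; linarith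
  set δ : ℝ := R' * (4 - R') / 16 with hδdef
  have hδpos : 0 < δ := by
    rw [hδdef]
    have h1 : 0 < R' := by linarith
    have h2 : 0 < 4 - R' := by linarith
    positivity
  obtain ⟨N, hN⟩ := exists_nat_gt (2 * R / (4 - R))
  obtain ⟨J, hJ⟩ := exists_nat_gt (3 / δ)
  set K : ℕ := N + 2 + J with hKdef
  refine ⟨5 ^ K, by positivity, ?_⟩
  intro S hpos hcov
  by_contra hcon
  push_neg at hcon
  -- hcon : ∀ θ, 1 ≤ θ → cost ≤ R * ⌊min θ B⌋
  -- Basic facts about the record sequence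
  have hm0 : ∀ k, 0 ≤ mlapM S (mlapTau S k) := fun k => mlapM_nonneg S _
  have hcost_le : ∀ k : ℕ, mlapCost S (mlapTau S k) ≤ R * (mlapTau S k : ℝ) := by
    intro k
    have h1 : (1 : ℝ) ≤ (mlapTau S k : ℝ) := by exact_mod_cast mlapTau_pos S k
    have h := hcon (mlapTau S k) h1
    have h2 : ((⌊min ((mlapTau S k : ℕ) : ℝ) ((5 ^ K : ℕ) : ℝ)⌋ : ℤ) : ℝ)
        ≤ (mlapTau S k : ℝ) :=
      le_trans (Int.floor_le _) (min_le_left _ _)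
    calc mlapCost S (mlapTau S k) ≤ R * ((⌊min ((mlapTau S k : ℕ) : ℝ) ((5 ^ K : ℕ) : ℝ)⌋ : ℤ) : ℝ) := h
      _ ≤ R * (mlapTau S k : ℝ) := mul_le_mul_of_nonneg_left h2 hR0
  have hτ5 : ∀ k : ℕ, (mlapTau S k : ℝ) ≤ 5 ^ k := by
    intro k
    induction k with
    | zero => simp [mlapTau]
    | succ n ih =>
      have h1 := mlapTau_succ_le S n
      have h2 := mlapM_le_cost S (mlapTau S n) hpos
      have h3 := hcost_le n
      have h4 : (1 : ℝ) ≤ 5 ^ n := by simpa using pow_le_pow_right₀ (by norm_num : (1:ℝ) ≤ 5) (Nat.zero_le n)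
      have h5 : (0 : ℝ) ≤ (mlapTau S n : ℝ) := Nat.cast_nonneg _
      have h6 : R * (mlapTau S n : ℝ) ≤ 4 * 5 ^ n := by nlinarith
      calc (mlapTau S (n + 1) : ℝ) ≤ mlapM S (mlapTau S n) + 1 := h1
        _ ≤ mlapCost S (mlapTau S n) + 1 := by linarith
        _ ≤ R * (mlapTau S n : ℝ) + 1 := by linarith
        _ ≤ 4 * 5 ^ n + 5 ^ n := by linarith
        _ = 5 ^ (n + 1) := by ring
  have hτB : ∀ k : ℕ, k ≤ K → mlapTau S k ≤ 5 ^ K := by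
    intro k hk
    have h1 : ((5 : ℝ)) ^ k ≤ 5 ^ K := by
      apply pow_le_pow_right₀ (by norm_num : (1:ℝ) ≤ 5) hk
    have h2 : (mlapTau S k : ℝ) ≤ ((5 ^ K : ℕ) : ℝ) := by
      push_cast
      linarith [hτ5 k]
    exact_mod_cast h2
  have hτm : ∀ k : ℕ, k ≤ K → (mlapTau S k : ℝ) ≤ mlapM S (mlapTau S k) := by
    intro k hk
    obtain ⟨p, hpS, hp1, hp2⟩ := hcov (mlapTau S k) (mlapTau_pos S k) (hτB k hk)
    exact le_trans hp2 (le_mlapM S _ hpS (hpos p hpS).2 hp1)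
  have hτlb : ∀ k : ℕ, k ≤ K → k + 1 ≤ mlapTau S k := by
    intro k
    induction k with
    | zero => intro _; exact mlapTau_pos S 0
    | succ n ih =>
      intro hk
      have hn : n ≤ K := by omega
      have h1 : (mlapTau S n : ℝ) < (mlapTau S (n + 1) : ℝ) :=
        lt_of_le_of_lt (hτm n hn) (mlapM_lt_tau_succ S n)
      have h2 : mlapTau S n < mlapTau S (n + 1) := by exact_mod_cast h1
      have := ih hn
      omega
  have hmlb : ∀ k : ℕ, k ≤ K → (k : ℝ) + 1 ≤ mlapM S (mlapTau S k) := by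
    intro k hk
    have h1 : ((k + 1 : ℕ) : ℝ) ≤ (mlapTau S k : ℝ) := by exact_mod_cast hτlb k hk
    push_cast at h1
    linarith [hτm k hk]
  have hs_pos : ∀ k : ℕ, 0 < mlapSum S k := by
    intro k
    have h0 : mlapM S (mlapTau S 0) ≤ mlapSum S k :=
      Finset.single_le_sum (fun i _ => hm0 i) (Finset.mem_range.mpr (by omega))
    have h1 := hmlb 0 (Nat.zero_le K)
    push_cast at h1
    linarith
  -- The chain inequality: mlapSum S k ≤ cost(τ k)
  have hchain : ∀ k : ℕ, k ≤ K → mlapSum S k ≤ mlapCost S (mlapTau S k) := by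
    intro k
    induction k with
    | zero =>
      intro _
      have : mlapSum S 0 = mlapM S (mlapTau S 0) := Finset.sum_range_one _
      rw [this]
      exact mlapM_le_cost S _ hpos
    | succ n ih =>
      intro hk
      have hn : n ≤ K := by omega
      have hmp : 0 < mlapM S (mlapTau S (n + 1)) := by
        have := hmlb (n + 1) hk
        have h0 : (0 : ℝ) ≤ ((n + 1 : ℕ) : ℝ) := Nat.cast_nonneg _
        push_cast at this ⊢
        linarith
      obtain ⟨p, hpS, hp1, hp2⟩ := mlapM_attained S (mlapTau S (n + 1)) hmp
      have hpt : ¬(p.1 ≤ (mlapTau S n : ℝ)) := by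
        intro hle
        have h1 := le_mlapM S (mlapTau S n) hpS (hpos p hpS).2 hle
        have h2 := mlapM_lt_tau_succ S n
        have h3 := hτm (n + 1) hk
        rw [hp2] at h1
        linarith
      have hmono : (mlapTau S n : ℝ) ≤ (mlapTau S (n + 1) : ℝ) :=
        le_trans (hτm n hn) (mlapM_lt_tau_succ S n).le
      have hsub : insert p (S.filter (fun q => q.1 ≤ (mlapTau S n : ℝ)))
          ⊆ S.filter (fun q => q.1 ≤ (mlapTau S (n + 1) : ℝ)) := by
        intro q hq
        rcases Finset.mem_insert.mp hq with rfl | hq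
        · exact Finset.mem_filter.mpr ⟨hpS, hp1⟩
        · rw [Finset.mem_filter] at hq ⊢
          exact ⟨hq.1, le_trans hq.2 hmono⟩
      have hnotmem : p ∉ S.filter (fun q => q.1 ≤ (mlapTau S n : ℝ)) :=
        fun hmem => hpt (Finset.mem_filter.mp hmem).2
      have h1 : ∑ q ∈ insert p (S.filter (fun q => q.1 ≤ (mlapTau S n : ℝ))), q.2
          = p.2 + mlapCost S (mlapTau S n) := Finset.sum_insert hnotmem
      have h2 : ∑ q ∈ insert p (S.filter (fun q => q.1 ≤ (mlapTau S n : ℝ))), q.2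
          ≤ mlapCost S (mlapTau S (n + 1)) :=
        Finset.sum_le_sum_of_subset_of_nonneg hsub
          (fun q hq _ => (hpos q (Finset.mem_filter.mp hq).1).2)
      have h3 : mlapCost S (mlapTau S n) + mlapM S (mlapTau S (n + 1))
          ≤ mlapCost S (mlapTau S (n + 1)) := by
        rw [hp2] at h1
        linarith
      calc mlapSum S (n + 1) = mlapSum S n + mlapM S (mlapTau S (n + 1)) :=
            mlapSum_succ S n
        _ ≤ mlapCost S (mlapTau S n) + mlapM S (mlapTau S (n + 1)) := by
            linarith [ih hn]
        _ ≤ mlapCost S (mlapTau S (n + 1)) := h3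
  -- Upper bound on partial sums
  have hs_le : ∀ k : ℕ, k + 1 ≤ K →
      mlapSum S (k + 1) ≤ R * (mlapM S (mlapTau S k) + 1) := by
    intro k hk
    have h1 := hchain (k + 1) hk
    have h2 := hcost_le (k + 1)
    have h3 := mlapTau_succ_le S k
    have h4 : R * (mlapTau S (k + 1) : ℝ) ≤ R * (mlapM S (mlapTau S k) + 1) :=
      mul_le_mul_of_nonneg_left h3 hR0
    linarith
  have hs_le' : ∀ k : ℕ, N ≤ k → k + 1 ≤ K →
      mlapSum S (k + 1) ≤ R' * mlapM S (mlapTau S k) := by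
    intro k hNk hkK
    have h1 := hs_le k hkK
    have h2 : (N : ℝ) ≤ mlapM S (mlapTau S k) := by
      have ha : (N : ℝ) ≤ (k : ℝ) := by exact_mod_cast hNk
      have hb := hmlb k (by omega)
      linarith
    have h4R : (0 : ℝ) < 4 - R := by linarith
    have h3 : 2 * R < (N : ℝ) * (4 - R) := by
      rw [div_lt_iff₀ h4R] at hN
      linarith
    have h5 : (N : ℝ) * (4 - R) ≤ mlapM S (mlapTau S k) * (4 - R) :=
      mul_le_mul_of_nonneg_right h2 h4R.le
    have h6 : R * (mlapM S (mlapTau S k) + 1) ≤ R' * mlapM S (mlapTau S k) := by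
      rw [hR'def]
      nlinarith
    linarith
  -- The contraction sequence
  set c : ℕ → ℝ := fun j => max 1 (R' - (j : ℝ) * δ) with hcdef
  have hc1 : ∀ j, 1 ≤ c j := fun j => le_max_left _ _
  have hc4 : ∀ j, c j ≤ 4 := by
    intro j
    apply max_le (by norm_num)
    have : 0 ≤ (j : ℝ) * δ := mul_nonneg (Nat.cast_nonneg _) hδpos.le
    linarith
  have hcR' : ∀ j, c j ≤ R' := by
    intro j
    apply max_le (by linarith)
    have : 0 ≤ (j : ℝ) * δ := mul_nonneg (Nat.cast_nonneg _) hδpos.le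
    linarith
  have hkey : ∀ j, R' * (c j - 1) ≤ c j * (c j - δ) := by
    intro j
    have h1 := hc1 j
    have h4 := hc4 j
    have hd : 16 * δ = R' * (4 - R') := by rw [hδdef]; ring
    nlinarith [sq_nonneg (c j - R' / 2), mul_nonneg hδpos.le (sub_nonneg.mpr h4)]
  have hc_step : ∀ j : ℕ, c j - δ ≤ c (j + 1) := by
    intro j
    have h1 : (1 : ℝ) ≤ c (j + 1) + δ := by linarith [hc1 (j + 1), hδpos]
    have h2 : R' - (j : ℝ) * δ ≤ c (j + 1) + δ := by
      have h3 : R' - ((j + 1 : ℕ) : ℝ) * δ ≤ c (j + 1) := le_max_right _ _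
      push_cast at h3
      linarith
    have := max_le h1 h2
    simp only [hcdef] at *
    linarith
  -- Main induction
  have hind : ∀ j : ℕ, N + 1 + (j + 1) ≤ K →
      mlapSum S (N + 1 + (j + 1)) ≤ c j * mlapSum S (N + 1 + j) := by
    intro j
    induction j with
    | zero =>
      intro hj
      simp only [Nat.add_zero]
      have h1 : mlapSum S (N + 1 + 1) ≤ R' * mlapM S (mlapTau S (N + 1)) :=
        hs_le' (N + 1) (by omega) (by omega)
      have h2 := mlapM_le_mlapSum S (N + 1)
      have h3 : (0 : ℝ) ≤ R' := by linarith
      have h4 : R' ≤ c 0 := by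
        have : R' - ((0 : ℕ) : ℝ) * δ ≤ c 0 := le_max_right _ _
        push_cast at this
        linarith
      have h5 : 0 ≤ mlapSum S (N + 1) := (hs_pos (N + 1)).le
      calc mlapSum S (N + 1 + 1) ≤ R' * mlapM S (mlapTau S (N + 1)) := h1
        _ ≤ R' * mlapSum S (N + 1) := mul_le_mul_of_nonneg_left h2 h3
        _ ≤ c 0 * mlapSum S (N + 1) := mul_le_mul_of_nonneg_right h4 h5
    | succ j ih =>
      intro hj
      have e1 : N + 1 + (j + 1 + 1) = (N + 1 + (j + 1)) + 1 := by omega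
      rw [e1]
      have ihj := ih (by omega)
      have e2 : N + 1 + (j + 1) = (N + 1 + j) + 1 := by omega
      have hb_eq : mlapSum S (N + 1 + (j + 1))
          = mlapSum S (N + 1 + j) + mlapM S (mlapTau S (N + 1 + (j + 1))) := by
        rw [e2]
        exact mlapSum_succ S (N + 1 + j)
      have hd : mlapSum S ((N + 1 + (j + 1)) + 1)
          ≤ R' * mlapM S (mlapTau S (N + 1 + (j + 1))) :=
        hs_le' (N + 1 + (j + 1)) (by omega) (by omega)
      set a := mlapSum S (N + 1 + j) with hadef
      set b := mlapSum S (N + 1 + (j + 1)) with hbdef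
      set g := c j with hgdef
      have ha0 : 0 < a := hs_pos _
      have hb0 : 0 < b := hs_pos _
      have hg1 : (1 : ℝ) ≤ g := hc1 j
      have hgR : g ≤ R' := hcR' j
      have hmb : mlapM S (mlapTau S (N + 1 + (j + 1))) = b - a := by
        rw [hb_eq]; ring
      rw [hmb] at hd
      -- hd : next ≤ R' * (b - a), ihj : b ≤ g * a
      have p1 : 0 ≤ a * (g * (g - δ) - R' * (g - 1)) :=
        mul_nonneg ha0.le (by linarith [hkey j])
      have p2 : 0 ≤ (g * a - b) * (R' + δ - g) :=
        mul_nonneg (by linarith) (by linarith [hδpos])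
      have hfinal : R' * (b - a) ≤ (g - δ) * b := by nlinarith [p1, p2]
      have h5 : (g - δ) * b ≤ c (j + 1) * b :=
        mul_le_mul_of_nonneg_right (hc_step j) hb0.le
      linarith
  -- Final contradiction
  have hc_J : c J = 1 := by
    have h1 : 3 < (J : ℝ) * δ := by
      rw [div_lt_iff₀ hδpos] at hJ
      linarith
    apply max_eq_left
    linarith
  have hK1 : N + 1 + (J + 1) ≤ K := by omega
  have hfin := hind J hK1
  rw [hc_J, one_mul] at hfin
  have e2 : N + 1 + (J + 1) = (N + 1 + J) + 1 := by omega
  have hb_eq : mlapSum S (N + 1 + (J + 1))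
      = mlapSum S (N + 1 + J) + mlapM S (mlapTau S (N + 1 + (J + 1))) := by
    rw [e2]
    exact mlapSum_succ S (N + 1 + J)
  have hmK : (0 : ℝ) < mlapM S (mlapTau S (N + 1 + (J + 1))) := by
    have h := hmlb (N + 1 + (J + 1)) hK1
    have h0 : (0 : ℝ) ≤ ((N + 1 + (J + 1) : ℕ) : ℝ) := Nat.cast_nonneg _
    linarith
  rw [hb_eq] at hfin
  linarith

/-- Lower bound of `4` for online MLAP-D on the line (via Single-Phase MLAP-D): for
every `R < 4` there is a positive integer `B` such that for every schedule `S`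
(a finite set of services `(t, y)`, serving `[0, y]` at time `t`) that serves each
request at point `x ∈ {1, …, B}` (issued at time `0` with deadline `x`) by its
deadline, there is an expiration time `θ ≥ 1` at which the schedule's cost so far
exceeds `R` times the optimum cost `⌊min(θ, B)⌋`. -/
theorem stmt12 (R : ℝ) (hR : R < 4) :
    ∃ B : ℕ, 0 < B ∧
      ∀ S : Finset (ℝ × ℝ),
        (∀ p ∈ S, 0 ≤ p.1 ∧ 0 ≤ p.2) →
        (∀ x : ℕ, 1 ≤ x → x ≤ B → ∃ p ∈ S, p.1 ≤ (x : ℝ) ∧ (x : ℝ) ≤ p.2) →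
        ∃ θ : ℝ, 1 ≤ θ ∧
          (∑ p ∈ S.filter (fun p => p.1 ≤ θ), p.2) > R * (⌊min θ (B : ℝ)⌋ : ℝ) := by
  by_cases h2 : 2 ≤ R
  · exact stmt12_aux R h2 hR
  · push_neg at h2
    obtain ⟨B, hB, hS⟩ := stmt12_aux 2 le_rfl (by norm_num)
    refine ⟨B, hB, ?_⟩
    intro S hpos hcov
    obtain ⟨θ, hθ, hgt⟩ := hS S hpos hcov
    refine ⟨θ, hθ, ?_⟩
    have hfloor : (1 : ℤ) ≤ ⌊min θ (B : ℝ)⌋ := by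
      apply Int.le_floor.mpr
      push_cast
      apply le_min hθ
      exact_mod_cast hB
    have hfloor0 : (0 : ℤ) ≤ ⌊min θ (B : ℝ)⌋ := by omega
    have hfloor' : (0 : ℝ) ≤ ((⌊min θ (B : ℝ)⌋ : ℤ) : ℝ) := by exact_mod_cast hfloor0
    calc R * ((⌊min θ (B : ℝ)⌋ : ℤ) : ℝ) ≤ 2 * ((⌊min θ (B : ℝ)⌋ : ℤ) : ℝ) :=
          mul_le_mul_of_nonneg_right h2.le hfloor'
      _ < _ := hgt
end

section
/- For every real R < 4 there exists a positive integer B with the following property. For a finite set S ⊆ ℝ≥0 × ℝ≥0 and a real θ > 0 define cost(S, θ) = ∑_{(t,y)∈S, t ≤ θ} y + ∑_{x=1}^{B} 6^{B−x} · inf({t | (t, y) ∈ S, t ≤ θ, y ≥ x} ∪ {θ}). Then for every finite S ⊆ ℝ≥0 × ℝ≥0 there exists θ > 0 such that cost(S, θ) > R · inf{cost(S', θ) | S' ⊆ ℝ≥0 × ℝ≥0 finite}. -/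
set_option maxHeartbeats 1000000

/-- The cost, by expiration time `θ`, of the schedule `S` (a finite set of services
`(t, y)`, serving `[0, y]` at time `t` at cost `y`) on the single-phase instance with
linear waiting costs in which `6^(B-x)` requests are issued at time `0` at each integer
point `x ∈ {1, …, B}`: the service cost of the services issued by time `θ`, plus, for
each point `x`, `6^(B-x)` times the first time `t ≤ θ` at which some service `(t, y)`
with `y ≥ x` serves the point (a request unserved by time `θ` pays `θ`). -/
noncomputable def lineCost (B : ℕ) (S : Finset (ℝ × ℝ)) (θ : ℝ) : ℝ :=
  (∑ p ∈ S.filter (fun p => p.1 ≤ θ), p.2)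
    + ∑ x ∈ Finset.Icc 1 B, (6 : ℝ) ^ (B - x) *
        sInf ({t : ℝ | ∃ p ∈ S, p.1 = t ∧ t ≤ θ ∧ (x : ℝ) ≤ p.2} ∪ {θ})

/-! ### Auxiliary facts about the total weight function -/

noncomputable def lcW (B k : ℕ) : ℝ := ∑ x ∈ Finset.Icc k B, (6 : ℝ) ^ (B - x)

lemma lcW_eq (B k : ℕ) : lcW B k = ((6:ℝ) ^ (B + 1 - k) - 1) / 5 := by
  unfold lcW
  rcases le_or_gt k B with h | h
  · rw [show Finset.Icc k B = Finset.image (fun j => B - j) (Finset.range (B+1-k)) from ?_]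
    · rw [Finset.sum_image ?inj]
      case inj => intro a ha b hb hab; simp only [Finset.coe_range, Set.mem_Iio] at ha hb hab; omega
      have : ∀ j ∈ Finset.range (B+1-k), (6:ℝ) ^ (B - (B - j)) = 6 ^ j := by
        intro j hj; simp only [Finset.mem_range] at hj; congr 1; omega
      rw [Finset.sum_congr rfl this, geom_sum_eq (by norm_num)]
      norm_num
    · ext x
      simp only [Finset.mem_Icc, Finset.mem_image, Finset.mem_range]
      constructor
      · intro ⟨h1, h2⟩; exact ⟨B - x, by omega, by omega⟩
      · rintro ⟨j, hj, rfl⟩; omega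
  · rw [Finset.Icc_eq_empty (by omega), show B + 1 - k = 0 by omega]
    simp

lemma lcW_nonneg (B k : ℕ) : 0 ≤ lcW B k :=
  Finset.sum_nonneg fun x _ => by positivity

lemma lcW_pos (B k : ℕ) (h : k ≤ B) : 0 < lcW B k := by
  rw [lcW_eq]
  have : (6:ℝ) ^ 1 ≤ 6 ^ (B + 1 - k) := pow_le_pow_right₀ (by norm_num) (by omega)
  norm_num at this ⊢; linarith

lemma lcW_succB (B : ℕ) : lcW B (B + 1) = 0 := by
  unfold lcW; rw [Finset.Icc_eq_empty (by omega)]; simp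

lemma lcW_shift (B X K : ℕ) (h : X + K ≤ B) :
    (6:ℝ) ^ K * lcW B (X + K + 1) ≤ lcW B (X + 1) := by
  rw [lcW_eq, lcW_eq, show B + 1 - (X + 1) = B - X by omega,
    show B + 1 - (X + K + 1) = B - X - K by omega]
  have h1 : (6:ℝ) ^ K * 6 ^ (B - X - K) = 6 ^ (B - X) := by
    rw [← pow_add]; congr 1; omega
  have h2 : (1:ℝ) ≤ 6 ^ K := one_le_pow₀ (by norm_num)
  nlinarith [h2]

/-! ### Auxiliary facts about waiting times and costs -/

section waitfacts
variable {S : Finset (ℝ × ℝ)} {θ : ℝ} {x : ℕ}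

lemma wait_lb (hS : ∀ p ∈ S, 0 ≤ p.1 ∧ 0 ≤ p.2) (hθ : 0 ≤ θ) :
    ∀ t ∈ ({t : ℝ | ∃ p ∈ S, p.1 = t ∧ t ≤ θ ∧ (x : ℝ) ≤ p.2} ∪ {θ}), 0 ≤ t := by
  rintro t (⟨p, hp, rfl, -, -⟩ | rfl)
  · exact (hS p hp).1
  · exact hθ

lemma wait_bdd (hS : ∀ p ∈ S, 0 ≤ p.1 ∧ 0 ≤ p.2) (hθ : 0 ≤ θ) :
    BddBelow ({t : ℝ | ∃ p ∈ S, p.1 = t ∧ t ≤ θ ∧ (x : ℝ) ≤ p.2} ∪ {θ}) :=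
  ⟨0, wait_lb hS hθ⟩

lemma wait_nonneg (hS : ∀ p ∈ S, 0 ≤ p.1 ∧ 0 ≤ p.2) (hθ : 0 ≤ θ) :
    0 ≤ sInf ({t : ℝ | ∃ p ∈ S, p.1 = t ∧ t ≤ θ ∧ (x : ℝ) ≤ p.2} ∪ {θ}) :=
  Real.sInf_nonneg (wait_lb hS hθ)

lemma wait_le_theta (hS : ∀ p ∈ S, 0 ≤ p.1 ∧ 0 ≤ p.2) (hθ : 0 ≤ θ) :
    sInf ({t : ℝ | ∃ p ∈ S, p.1 = t ∧ t ≤ θ ∧ (x : ℝ) ≤ p.2} ∪ {θ}) ≤ θ :=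
  csInf_le (wait_bdd hS hθ) (Set.mem_union_right _ rfl)

end waitfacts

lemma lineCost_nonneg (B : ℕ) (S : Finset (ℝ × ℝ)) (θ : ℝ)
    (hS : ∀ p ∈ S, 0 ≤ p.1 ∧ 0 ≤ p.2) (hθ : 0 ≤ θ) : 0 ≤ lineCost B S θ := by
  unfold lineCost
  have h1 : 0 ≤ ∑ p ∈ S.filter (fun p => p.1 ≤ θ), p.2 :=
    Finset.sum_nonneg fun p hp => (hS p (Finset.mem_filter.1 hp).1).2
  have h2 : 0 ≤ ∑ x ∈ Finset.Icc 1 B, (6 : ℝ) ^ (B - x) *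
      sInf ({t : ℝ | ∃ p ∈ S, p.1 = t ∧ t ≤ θ ∧ (x : ℝ) ≤ p.2} ∪ {θ}) :=
    Finset.sum_nonneg fun x _ => mul_nonneg (by positivity) (wait_nonneg hS hθ)
  linarith

lemma cost_single_le (B y : ℕ) (θ : ℝ) (hθ : 0 < θ) :
    lineCost B {((0:ℝ), (y:ℝ))} θ ≤ y + θ * lcW B (y + 1) := by
  unfold lineCost
  have hval : ∀ p ∈ ({((0:ℝ), (y:ℝ))} : Finset (ℝ × ℝ)), 0 ≤ p.1 ∧ 0 ≤ p.2 := by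
    intro p hp; rw [Finset.mem_singleton] at hp; subst hp
    exact ⟨le_refl 0, Nat.cast_nonneg y⟩
  have hserv : (∑ p ∈ ({((0:ℝ), (y:ℝ))} : Finset (ℝ × ℝ)).filter (fun p => p.1 ≤ θ), p.2)
      = (y:ℝ) := by
    rw [Finset.filter_singleton, if_pos hθ.le, Finset.sum_singleton]
  rw [hserv]
  have hwait : ∑ x ∈ Finset.Icc 1 B, (6 : ℝ) ^ (B - x) *
      sInf ({t : ℝ | ∃ p ∈ ({((0:ℝ), (y:ℝ))} : Finset (ℝ × ℝ)), p.1 = t ∧ t ≤ θ ∧ (x : ℝ) ≤ p.2} ∪ {θ})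
      ≤ ∑ x ∈ Finset.Icc 1 B, (6 : ℝ) ^ (B - x) * (if y < x then θ else 0) := by
    apply Finset.sum_le_sum
    intro x _
    apply mul_le_mul_of_nonneg_left _ (by positivity)
    by_cases hxy : y < x
    · rw [if_pos hxy]; exact wait_le_theta hval hθ.le
    · rw [if_neg hxy]
      apply csInf_le (wait_bdd hval hθ.le)
      left
      exact ⟨((0:ℝ), (y:ℝ)), Finset.mem_singleton_self _, rfl, hθ.le,
        by simpa using (Nat.cast_le (α := ℝ)).2 (Nat.le_of_not_lt hxy)⟩
  have hsum : ∑ x ∈ Finset.Icc 1 B, (6 : ℝ) ^ (B - x) * (if y < x then θ else 0)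
      = θ * lcW B (y + 1) := by
    unfold lcW
    rw [Finset.mul_sum]
    rw [show Finset.Icc (y+1) B = (Finset.Icc 1 B).filter (fun x => y < x) from ?_]
    · rw [Finset.sum_filter]
      apply Finset.sum_congr rfl
      intro x _
      by_cases hxy : y < x <;> simp [hxy, mul_comm]
    · ext x; simp only [Finset.mem_Icc, Finset.mem_filter]; omega
  linarith

/-! ### The key arithmetic lemma: a sequence of "serve-levels" satisfying the
competitive constraints with ratio `R < 4` cannot grow large. -/

lemma rho_bound (R E : ℝ) (hR1 : 1 ≤ R) (hR4 : R < 4) (hE : 1 ≤ E)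
    (m : ℕ) (X : ℕ → ℕ) (hX0 : X 0 = 0)
    (hC : ∀ i, 1 ≤ i → i ≤ m → (∑ j ∈ Finset.Icc 1 i, (X j : ℝ)) ≤ R * X (i-1) + E) :
    (X m : ℝ) ≤ 4 * E * 6 ^ (Nat.ceil (3*R/(2*Real.sqrt R - R)) + 1) := by
  classical
  have hR0 : (0:ℝ) ≤ R := by linarith
  have hs : Real.sqrt R ^ 2 = R := Real.sq_sqrt hR0
  have hs1 : 1 ≤ Real.sqrt R := by
    rw [show (1:ℝ) = Real.sqrt 1 by simp]; exact Real.sqrt_le_sqrt hR1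
  have hδpos : 0 < 2*Real.sqrt R - R := by nlinarith
  set δ := 2*Real.sqrt R - R with hδdef
  set M := Nat.ceil (3*R/δ) with hMdef
  have hpow1 : (1:ℝ) ≤ 6^(M+1) := one_le_pow₀ (by norm_num)
  set S : ℕ → ℝ := fun i => ∑ j ∈ Finset.Icc 1 i, (X j:ℝ) with hSdef
  have hS0 : S 0 = 0 := by simp [hSdef]
  have hSsucc : ∀ i, S (i+1) = S i + X (i+1) := fun i =>
    Finset.sum_Icc_succ_top (by omega) _
  have hSnn : ∀ i, 0 ≤ S i := fun i =>
    Finset.sum_nonneg fun j _ => Nat.cast_nonneg _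
  have hSmono : ∀ i j, i ≤ j → S i ≤ S j := by
    intro i j hij
    apply Finset.sum_le_sum_of_subset_of_nonneg
    · exact Finset.Icc_subset_Icc_right hij
    · intro k _ _; exact Nat.cast_nonneg _
  have hXS : ∀ i, (X i:ℝ) ≤ S i := by
    intro i
    rcases Nat.eq_zero_or_pos i with h | h
    · subst h; simp [hS0, hX0]
    · exact Finset.single_le_sum (f := fun j => (X j:ℝ))
        (fun j _ => Nat.cast_nonneg _) (Finset.mem_Icc.2 ⟨h, le_refl i⟩)
  have hXiS : ∀ i, 1 ≤ i → i ≤ m → (X i:ℝ) = S i - S (i-1) := by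
    intro i h1 _
    have := hSsucc (i-1)
    rw [show i-1+1 = i by omega] at this
    linarith
  suffices hSm : S m ≤ 4 * E * 6 ^ (M+1) by linarith [hXS m]
  by_cases hA : ∀ i ≤ m, S i < 3*E
  · have := hA m le_rfl; nlinarith
  · push_neg at hA
    obtain ⟨i₀, hi₀m, hi₀⟩ := hA
    have hPex : ∃ i, 3*E ≤ S i := ⟨i₀, hi₀⟩
    set a := Nat.find hPex with hadef
    have haSa : 3*E ≤ S a := Nat.find_spec hPex
    have hamin : ∀ j, j < a → S j < 3*E := fun j hj => not_le.1 (Nat.find_min hPex hj)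
    have ham : a ≤ m := le_trans (Nat.find_le hi₀) hi₀m
    have ha1 : 1 ≤ a := by
      rcases Nat.eq_zero_or_pos a with h | h
      · exfalso; rw [h] at haSa; rw [hS0] at haSa; linarith
      · exact h
    have haS' : S (a-1) < 3*E := hamin _ (by omega)
    have hurec : ∀ i, 1 ≤ i → i+1 ≤ m →
        S (i+1) ≤ R * (S i - S (i-1)) + E := by
      intro i h1 h2
      have hc := hC (i+1) (by omega) h2
      rw [show i+1-1 = i from rfl] at hc
      rw [hXiS i h1 (by omega)] at hc
      exact hc
    have hmle : m ≤ a + M := by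
      by_contra hcon
      push_neg at hcon
      have hupos : ∀ i, a ≤ i → 0 < S i - 2*E := by
        intro i hi
        have := hSmono a i hi
        linarith
      have key : ∀ k, a+1+k ≤ m →
          S (a+1+k) - 2*E ≤ (3*R - k*δ) * (S (a+k) - 2*E) := by
        intro k
        induction k with
        | zero =>
          intro hk
          simp only [Nat.add_zero, Nat.cast_zero, zero_mul, sub_zero]
          have h1 := hurec a ha1 (by omega)
          have h2 : 0 ≤ S (a-1) := hSnn _
          have h3 : E ≤ S a - 2*E := by linarith
          have h4 : R*E ≤ R*(S a - 2*E) := mul_le_mul_of_nonneg_left h3 hR0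
          nlinarith
        | succ k ih =>
          intro hk
          have ihh := ih (by omega)
          set i := a+1+k with hidef
          have h1 : S (i+1) ≤ R * (S i - S (i-1)) + E := hurec i (by omega) (by omega)
          have hi1 : i - 1 = a + k := by omega
          rw [hi1] at h1
          set c := 3*R - k*δ with hcdef
          have hpprev : 0 < S (a+k) - 2*E := hupos _ (by omega)
          have hpi : 0 < S i - 2*E := hupos _ (by omega)
          have hinc : S (a+k) - 2*E ≤ S i - 2*E := by
            have := hSmono (a+k) i (by omega); linarith
          have hcpos : 0 < c := by nlinarith
          have hgoalc : (3*R - (↑(k+1):ℝ)*δ) = c - δ := by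
            push_cast; ring
          rw [show a+1+(k+1) = i+1 by omega, show a+(k+1) = i by omega, hgoalc]
          rcases le_or_gt (2*Real.sqrt R) c with hcase | hcase
          · have h5 : 0 ≤ (c - 2*Real.sqrt R) * (S i - 2*E) :=
              mul_nonneg (by linarith) hpi.le
            have h6 : 0 ≤ R * (S (a+k) - 2*E) := mul_nonneg hR0 hpprev.le
            nlinarith
          · have hkey : (2*Real.sqrt R - c) * (S i - 2*E)
                ≤ (2*Real.sqrt R - c) * (c * (S (a+k) - 2*E)) :=
              mul_le_mul_of_nonneg_left ihh (by linarith)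
            have hkey2 : (2*Real.sqrt R - c)*c ≤ R := by
              nlinarith [sq_nonneg (c - Real.sqrt R)]
            have hkey3 : (2*Real.sqrt R - c) * (c * (S (a+k) - 2*E)) ≤ R * (S (a+k) - 2*E) := by
              rw [← mul_assoc]
              exact mul_le_mul_of_nonneg_right hkey2 hpprev.le
            nlinarith
      have hk1 : a + 1 + (m - a - 1) = m := by omega
      have hk2 : a + (m - a - 1) = m - 1 := by omega
      have hfin := key (m - a - 1) (by omega)
      rw [hk1, hk2] at hfin
      have h1 : 0 < S (m-1) - 2*E := hupos _ (by omega)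
      have h2 : S (m-1) ≤ S m := hSmono _ _ (by omega)
      have h3 : (1:ℝ) ≤ 3*R - (m-a-1:ℕ)*δ := by nlinarith
      have h4 : ((m-a-1:ℕ):ℝ) < 3*R/δ := by
        rw [lt_div_iff₀ hδpos]; nlinarith
      have h5 : (m-a-1:ℕ) < M := Nat.lt_ceil.2 h4
      omega
    have hgrow : ∀ k, a-1+k ≤ m → S (a-1+k) + E ≤ (S (a-1) + E) * 6 ^ k := by
      intro k
      induction k with
      | zero => intro _; simp
      | succ k ih =>
        intro hk
        have ihh := ih (by omega)
        set i := a-1+k with hidef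
        have hc := hC (i+1) (by omega) (by omega)
        rw [show i+1-1 = i from rfl] at hc
        have h1 : (X (i+1):ℝ) = S (i+1) - S i := by
          have := hSsucc i; linarith
        have h2 : S (i+1) ≤ R * X i + E := hc
        have h3 : (X i:ℝ) ≤ S i := hXS i
        have h4 : S (i+1) + E ≤ 6 * (S i + E) := by nlinarith [hSnn i]
        have h5 : 6 * (S i + E) ≤ 6 * ((S (a-1) + E) * 6 ^ k) := by linarith
        calc S (i+1) + E ≤ 6 * ((S (a-1) + E) * 6 ^ k) := by linarith
          _ = (S (a-1) + E) * 6 ^ (k+1) := by ring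
    have hfin := hgrow (m - (a-1)) (by omega)
    rw [show a-1 + (m - (a-1)) = m by omega] at hfin
    have hexp : (6:ℝ)^(m - (a-1)) ≤ 6^(M+1) :=
      pow_le_pow_right₀ (by norm_num) (by omega)
    have hbase : S (a-1) + E ≤ 4*E := by linarith
    have hbig : (S (a-1) + E) * 6^(m-(a-1)) ≤ 4*E*6^(M+1) := by
      apply mul_le_mul hbase hexp (by positivity) (by linarith)
    linarith

lemma aux_pow (a : ℕ) : ∃ n : ℕ, a * (n + 3) < 6 ^ n := by
  rcases Nat.eq_zero_or_pos a with h | h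
  · exact ⟨1, by simp [h]⟩
  · refine ⟨2*a+4, ?_⟩
    have h1 : a < 6 ^ a := Nat.lt_pow_self (by norm_num : 1 < 6)
    have h2 : 6^(2*a+4) = 1296 * (6^a * 6^a) := by
      rw [show 2*a+4 = a + a + 4 by omega, pow_add, pow_add]; ring
    rw [h2]
    nlinarith [h1, h]

lemma main_lb (R : ℝ) (hR1 : 1 ≤ R) (hR4 : R < 4) :
    ∃ B : ℕ, 0 < B ∧
      ∀ S : Finset (ℝ × ℝ), (∀ p ∈ S, 0 ≤ p.1 ∧ 0 ≤ p.2) →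
        ∃ θ : ℝ, 0 < θ ∧
          lineCost B S θ >
            R * sInf {c : ℝ | ∃ S' : Finset (ℝ × ℝ),
              (∀ p ∈ S', 0 ≤ p.1 ∧ 0 ≤ p.2) ∧ c = lineCost B S' θ} := by
  classical
  have hR0 : (0:ℝ) ≤ R := by linarith
  set M := Nat.ceil (3*R/(2*Real.sqrt R - R)) with hMdef
  obtain ⟨n, hn⟩ := aux_pow (16 * 6^(M+1))
  set B := 6^n with hBdef
  have hBpos : 0 < B := Nat.pow_pos (by norm_num)
  set K := n + 2 with hKdef
  set E := R * (K+1 : ℕ) with hEdef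
  refine ⟨B, hBpos, ?_⟩
  intro S hS
  by_contra hcon
  push_neg at hcon
  -- hcon : ∀ θ, 0 < θ → lineCost B S θ ≤ R * sInf {...}
  have hOptbdd : ∀ θ : ℝ, 0 ≤ θ → BddBelow {c : ℝ | ∃ S' : Finset (ℝ × ℝ),
      (∀ p ∈ S', 0 ≤ p.1 ∧ 0 ≤ p.2) ∧ c = lineCost B S' θ} := by
    intro θ hθ
    refine ⟨0, ?_⟩
    rintro c ⟨S', hS', rfl⟩
    exact lineCost_nonneg B S' θ hS' hθ
  have hOptub : ∀ θ : ℝ, 0 < θ → ∀ y : ℕ,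
      sInf {c : ℝ | ∃ S' : Finset (ℝ × ℝ),
        (∀ p ∈ S', 0 ≤ p.1 ∧ 0 ≤ p.2) ∧ c = lineCost B S' θ}
      ≤ y + θ * lcW B (y + 1) := by
    intro θ hθ y
    have hmem : lineCost B {((0:ℝ), (y:ℝ))} θ ∈ {c : ℝ | ∃ S' : Finset (ℝ × ℝ),
        (∀ p ∈ S', 0 ≤ p.1 ∧ 0 ≤ p.2) ∧ c = lineCost B S' θ} := by
      refine ⟨{((0:ℝ), (y:ℝ))}, ?_, rfl⟩
      intro p hp; rw [Finset.mem_singleton] at hp; subst hp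
      exact ⟨le_refl 0, Nat.cast_nonneg y⟩
    exact le_trans (csInf_le (hOptbdd θ hθ.le) hmem) (cost_single_le B y θ hθ)
  have hkey : ∀ θ : ℝ, 0 < θ → ∀ y : ℕ,
      lineCost B S θ ≤ R * (y + θ * lcW B (y + 1)) := by
    intro θ hθ y
    exact le_trans (hcon θ hθ) (mul_le_mul_of_nonneg_left (hOptub θ hθ y) hR0)
  -- every point must be covered
  by_cases hcov : ∀ x ∈ Finset.Icc 1 B, (S.filter (fun p => (x:ℝ) ≤ p.2)).Nonempty
  swap
  · push_neg at hcov
    obtain ⟨x, hx, hempty⟩ := hcov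
    have hθpos : (0:ℝ) < R * B + 1 := by
      have : (0:ℝ) ≤ R * B := mul_nonneg hR0 (Nat.cast_nonneg B)
      linarith
    set θ := R * B + 1 with hθdef
    have hsetempty : {t : ℝ | ∃ p ∈ S, p.1 = t ∧ t ≤ θ ∧ (x : ℝ) ≤ p.2} = ∅ := by
      ext t
      simp only [Set.mem_setOf_eq, Set.mem_empty_iff_false, iff_false]
      rintro ⟨p, hp, rfl, -, hx2⟩
      have : p ∈ S.filter (fun p => (x:ℝ) ≤ p.2) := Finset.mem_filter.2 ⟨hp, hx2⟩
      rw [hempty] at this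
      exact absurd this (Finset.notMem_empty p)
    have hterm : (6:ℝ) ^ (B - x) *
        sInf ({t : ℝ | ∃ p ∈ S, p.1 = t ∧ t ≤ θ ∧ (x : ℝ) ≤ p.2} ∪ {θ}) = 6 ^ (B-x) * θ := by
      rw [hsetempty, Set.empty_union, csInf_singleton]
    have hALGlb : θ ≤ lineCost B S θ := by
      unfold lineCost
      have h1 : 0 ≤ ∑ p ∈ S.filter (fun p => p.1 ≤ θ), p.2 :=
        Finset.sum_nonneg fun p hp => (hS p (Finset.mem_filter.1 hp).1).2
      have h2 : (6:ℝ) ^ (B - x) * sInf ({t : ℝ | ∃ p ∈ S, p.1 = t ∧ t ≤ θ ∧ (x : ℝ) ≤ p.2} ∪ {θ})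
          ≤ ∑ x ∈ Finset.Icc 1 B, (6 : ℝ) ^ (B - x) *
            sInf ({t : ℝ | ∃ p ∈ S, p.1 = t ∧ t ≤ θ ∧ (x : ℝ) ≤ p.2} ∪ {θ}) :=
        Finset.single_le_sum
          (f := fun y : ℕ => (6:ℝ) ^ (B - y) *
            sInf ({t : ℝ | ∃ p ∈ S, p.1 = t ∧ t ≤ θ ∧ (y : ℝ) ≤ p.2} ∪ {θ}))
          (fun i _ => mul_nonneg (by positivity) (wait_nonneg hS hθpos.le)) hx
      rw [hterm] at h2
      have h3 : (1:ℝ) ≤ 6 ^ (B-x) := one_le_pow₀ (by norm_num)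
      nlinarith
    have hub := hkey θ hθpos B
    rw [lcW_succB] at hub
    simp only [mul_zero, add_zero] at hub
    linarith
  -- define first-service times τ
  set τ : ℕ → ℝ := fun x =>
    if h : (S.filter (fun p => (x:ℝ) ≤ p.2)).Nonempty
    then ((S.filter (fun p => (x:ℝ) ≤ p.2)).image Prod.fst).min' (h.image _)
    else 0 with hτdef
  have hτmem : ∀ x ∈ Finset.Icc 1 B, ∃ p ∈ S, p.1 = τ x ∧ (x:ℝ) ≤ p.2 := by
    intro x hx
    have hne := hcov x hx
    have hmin := Finset.min'_mem _ (hne.image Prod.fst)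
    rw [Finset.mem_image] at hmin
    obtain ⟨p, hp, hp1⟩ := hmin
    rw [Finset.mem_filter] at hp
    refine ⟨p, hp.1, ?_, hp.2⟩
    rw [hτdef]; simp only [dif_pos hne]; rw [hp1]
  have hτle : ∀ x : ℕ, ∀ p ∈ S, (x:ℝ) ≤ p.2 → τ x ≤ p.1 := by
    intro x p hp hx
    have hne : (S.filter (fun p => (x:ℝ) ≤ p.2)).Nonempty :=
      ⟨p, Finset.mem_filter.2 ⟨hp, hx⟩⟩
    rw [hτdef]; simp only [dif_pos hne]
    exact Finset.min'_le _ _ (Finset.mem_image_of_mem _ (Finset.mem_filter.2 ⟨hp, hx⟩))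
  have hτnonneg : ∀ x ∈ Finset.Icc 1 B, 0 ≤ τ x := by
    intro x hx
    obtain ⟨p, hp, h1, -⟩ := hτmem x hx
    rw [← h1]; exact (hS p hp).1
  have hτmono : ∀ x x' : ℕ, 1 ≤ x → x ≤ x' → x' ≤ B → τ x ≤ τ x' := by
    intro x x' h1 h2 h3
    obtain ⟨p, hp, hp1, hp2⟩ := hτmem x' (Finset.mem_Icc.2 ⟨by omega, h3⟩)
    rw [← hp1]
    exact hτle x p hp (le_trans (by exact_mod_cast h2) hp2)
  -- no point may be covered at time 0
  by_cases hzero : ∃ x ∈ Finset.Icc 1 B, τ x = 0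
  · obtain ⟨x, hx, h0⟩ := hzero
    obtain ⟨p, hpS, hp1, hp2⟩ := hτmem x hx
    have hWpos : (0:ℝ) < R * lcW B 1 + 1 := by
      have : (0:ℝ) ≤ R * lcW B 1 := mul_nonneg hR0 (lcW_nonneg B 1)
      linarith
    set θ := 1 / (R * lcW B 1 + 1) with hθdef
    have hθpos : 0 < θ := by positivity
    have hALGlb : (1:ℝ) ≤ lineCost B S θ := by
      unfold lineCost
      have hpf : p ∈ S.filter (fun p => p.1 ≤ θ) := by
        refine Finset.mem_filter.2 ⟨hpS, ?_⟩
        rw [hp1, h0]; exact hθpos.le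
      have h1 : p.2 ≤ ∑ q ∈ S.filter (fun p => p.1 ≤ θ), q.2 :=
        Finset.single_le_sum (f := fun q : ℝ × ℝ => q.2)
          (fun q hq => (hS q (Finset.mem_filter.1 hq).1).2) hpf
      have h2 : 0 ≤ ∑ x ∈ Finset.Icc 1 B, (6 : ℝ) ^ (B - x) *
          sInf ({t : ℝ | ∃ p ∈ S, p.1 = t ∧ t ≤ θ ∧ (x : ℝ) ≤ p.2} ∪ {θ}) :=
        Finset.sum_nonneg fun x _ => mul_nonneg (by positivity) (wait_nonneg hS hθpos.le)
      have h3 : (1:ℝ) ≤ x := by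
        have := (Finset.mem_Icc.1 hx).1
        exact_mod_cast this
      linarith [le_trans h3 hp2]
    have hub := hkey θ hθpos 0
    simp only [Nat.cast_zero, zero_add, Nat.zero_add] at hub
    have hθeq : θ * (R * lcW B 1 + 1) = 1 := by
      rw [hθdef]; field_simp
    have hlt : R * (θ * lcW B (0 + 1)) < 1 := by
      rw [show (0:ℕ) + 1 = 1 from rfl]
      nlinarith [hθeq, hθpos, mul_nonneg hR0 (lcW_nonneg B 1)]
    linarith
  push_neg at hzero
  have hτpos : ∀ x ∈ Finset.Icc 1 B, 0 < τ x := fun x hx =>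
    lt_of_le_of_ne (hτnonneg x hx) (Ne.symm (hzero x hx))
  -- the jump structure
  set G : ℕ → ℕ := fun x =>
    if h : ((Finset.Icc 1 B).filter (fun x' => τ x' = τ (x+1))).Nonempty
    then (((Finset.Icc 1 B).filter (fun x' => τ x' = τ (x+1)))).max' h
    else B with hGdef
  have hGfacts : ∀ x, x < B → x < G x ∧ G x ≤ B ∧ τ (G x) = τ (x+1) ∧
      ∀ x' ∈ Finset.Icc 1 B, τ x' = τ (x+1) → x' ≤ G x := by
    intro x hxB
    have hmem : x + 1 ∈ (Finset.Icc 1 B).filter (fun x' => τ x' = τ (x+1)) :=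
      Finset.mem_filter.2 ⟨Finset.mem_Icc.2 ⟨by omega, by omega⟩, rfl⟩
    have hne : ((Finset.Icc 1 B).filter (fun x' => τ x' = τ (x+1))).Nonempty := ⟨_, hmem⟩
    have hGval : G x = (((Finset.Icc 1 B).filter (fun x' => τ x' = τ (x+1)))).max' hne := by
      rw [hGdef]; simp only [dif_pos hne]
    have hmax := Finset.max'_mem _ hne
    rw [← hGval, Finset.mem_filter, Finset.mem_Icc] at hmax
    refine ⟨?_, hmax.1.2, hmax.2, ?_⟩
    · have := Finset.le_max' _ _ hmem
      rw [← hGval] at this; omega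
    · intro x' hx' he
      have := Finset.le_max' ((Finset.Icc 1 B).filter (fun x' => τ x' = τ (x+1))) x'
        (Finset.mem_filter.2 ⟨hx', he⟩)
      rw [← hGval] at this; exact this
  set X : ℕ → ℕ := fun i => G^[i] 0 with hXdef
  have hX0 : X 0 = 0 := rfl
  have hXsucc : ∀ i, X (i+1) = G (X i) := fun i => Function.iterate_succ_apply' G i 0
  have hXex : ∃ i, X i = B := by
    have hstep : ∀ i, (∃ j ≤ i, X j = B) ∨ (X i < B ∧ i ≤ X i) := by
      intro i
      induction i with
      | zero => right; rw [hX0]; exact ⟨hBpos, le_refl 0⟩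
      | succ i ih =>
        rcases ih with ⟨j, hj, e⟩ | ⟨hlt, hle⟩
        · exact Or.inl ⟨j, le_trans hj (Nat.le_succ i), e⟩
        · obtain ⟨hg1, hg2, -, -⟩ := hGfacts (X i) hlt
          rcases eq_or_lt_of_le hg2 with heq | hlt2
          · exact Or.inl ⟨i+1, le_refl _, by rw [hXsucc]; exact heq⟩
          · right
            constructor
            · rw [hXsucc]; exact hlt2
            · rw [hXsucc]; omega
    rcases hstep B with ⟨j, -, e⟩ | ⟨h1, h2⟩
    · exact ⟨j, e⟩
    · omega
  set m := Nat.find hXex with hmdef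
  have hm : X m = B := Nat.find_spec hXex
  have hmmin : ∀ i, i < m → X i ≠ B := fun i hi => Nat.find_min hXex hi
  have hXleB : ∀ i, i ≤ m → X i ≤ B := by
    intro i
    induction i with
    | zero => intro _; rw [hX0]; omega
    | succ i ih =>
      intro hi
      have h1 : X i < B := lt_of_le_of_ne (ih (by omega)) (hmmin i (by omega))
      rw [hXsucc]
      exact (hGfacts _ h1).2.1
  have hXltB : ∀ i, i < m → X i < B := fun i hi =>
    lt_of_le_of_ne (hXleB i hi.le) (hmmin i hi)
  have hm1 : 1 ≤ m := by
    rcases Nat.eq_zero_or_pos m with h | h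
    · exfalso; rw [h] at hm; rw [hX0] at hm; omega
    · exact h
  have hXmono : ∀ i, i < m → X i < X (i+1) := by
    intro i hi
    rw [hXsucc]
    exact (hGfacts _ (hXltB i hi)).1
  have hXpos : ∀ i, 1 ≤ i → i ≤ m → 1 ≤ X i := by
    intro i h1 h2
    have := hXmono (i-1) (by omega)
    rw [show i-1+1 = i by omega] at this
    omega
  have hτblock : ∀ i, i < m → τ (X (i+1)) = τ (X i + 1) := by
    intro i hi
    rw [hXsucc]
    exact (hGfacts _ (hXltB i hi)).2.2.1
  set v : ℕ → ℝ := fun i => τ (X i) with hvdef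
  have hvpos : ∀ i, 1 ≤ i → i ≤ m → 0 < v i := by
    intro i h1 h2
    exact hτpos (X i) (Finset.mem_Icc.2 ⟨hXpos i h1 h2, hXleB i h2⟩)
  have hvmono : ∀ i, 1 ≤ i → i < m → v i < v (i+1) := by
    intro i h1 hi
    have hXi : X i < B := hXltB i hi
    have hXi1 : 1 ≤ X i := hXpos i h1 hi.le
    have hblk : v (i+1) = τ (X i + 1) := hτblock i hi
    have hle : τ (X i) ≤ τ (X i + 1) := hτmono (X i) (X i + 1) hXi1 (by omega) (by omega)
    rcases lt_or_eq_of_le hle with hlt | heq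
    · rw [hblk]; exact hlt
    · exfalso
      have hblk' : τ (X i) = τ (X (i-1) + 1) := by
        have := hτblock (i-1) (by omega)
        rw [show i-1+1 = i by omega] at this
        exact this
      have hmem : X i + 1 ∈ Finset.Icc 1 B := Finset.mem_Icc.2 ⟨by omega, by omega⟩
      have heq2 : τ (X i + 1) = τ (X (i-1) + 1) := by rw [← heq, hblk']
      have hle2 := ((hGfacts (X (i-1)) (hXltB (i-1) (by omega))).2.2.2) (X i + 1) hmem heq2
      have : G (X (i-1)) = X i := by
        rw [← hXsucc (i-1), show i-1+1 = i by omega]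
      omega
  have hvlemono : ∀ j i, 1 ≤ j → j ≤ i → i ≤ m → v j ≤ v i := by
    intro j i h1 h2 h3
    induction i with
    | zero => omega
    | succ i ih =>
      rcases Nat.lt_or_ge j (i+1) with hlt | hge
      · have hji : j ≤ i := by omega
        exact le_trans (ih hji (by omega)) (le_of_lt (hvmono i (by omega) (by omega)))
      · have : j = i + 1 := by omega
        rw [this]
  have hvstrict : ∀ j i, 1 ≤ j → j < i → i ≤ m → v j < v i := by
    intro j i h1 h2 h3
    have hstep : v j < v (j+1) := hvmono j h1 (by omega)
    rcases Nat.lt_or_ge (j+1) i with hlt | hge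
    · exact lt_of_lt_of_le hstep (hvlemono (j+1) i (by omega) (by omega) h3)
    · have : i = j + 1 := by omega
      rw [this]; exact hstep
  -- chosen services
  have hpfex : ∀ j, 1 ≤ j → j ≤ m → ∃ p, p ∈ S ∧ p.1 = v j ∧ (X j : ℝ) ≤ p.2 := by
    intro j h1 h2
    obtain ⟨p, hp, he, hx⟩ := hτmem (X j) (Finset.mem_Icc.2 ⟨hXpos j h1 h2, hXleB j h2⟩)
    exact ⟨p, hp, he, hx⟩
  choose! pf hpfS hpf1 hpf2 using hpfex
  -- the master constraint
  have hCi : ∀ i, 1 ≤ i → i ≤ m → (∑ j ∈ Finset.Icc 1 i, (X j : ℝ)) ≤ R * X (i-1) + E := by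
    intro i h1 h2
    have hθpos : 0 < v i := hvpos i h1 h2
    have hXim : X (i-1) < B := hXltB (i-1) (by omega)
    -- LB1 : total level sum is at most the cost
    have hLB1 : (∑ j ∈ Finset.Icc 1 i, (X j : ℝ)) ≤ lineCost B S (v i) := by
      unfold lineCost
      have hwnn : 0 ≤ ∑ x ∈ Finset.Icc 1 B, (6 : ℝ) ^ (B - x) *
          sInf ({t : ℝ | ∃ p ∈ S, p.1 = t ∧ t ≤ v i ∧ (x : ℝ) ≤ p.2} ∪ {v i}) :=
        Finset.sum_nonneg fun x _ => mul_nonneg (by positivity) (wait_nonneg hS hθpos.le)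
      have hstep1 : (∑ j ∈ Finset.Icc 1 i, (X j : ℝ)) ≤ ∑ j ∈ Finset.Icc 1 i, (pf j).2 := by
        apply Finset.sum_le_sum
        intro j hj
        rw [Finset.mem_Icc] at hj
        exact hpf2 j hj.1 (le_trans hj.2 h2)
      have hinj : ∀ j1 ∈ Finset.Icc 1 i, ∀ j2 ∈ Finset.Icc 1 i, pf j1 = pf j2 → j1 = j2 := by
        intro j1 hj1 j2 hj2 he
        rw [Finset.mem_Icc] at hj1 hj2
        have hv1 : v j1 = v j2 := by
          rw [← hpf1 j1 hj1.1 (le_trans hj1.2 h2), ← hpf1 j2 hj2.1 (le_trans hj2.2 h2), he]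
        by_contra hne
        rcases Nat.lt_or_ge j1 j2 with hlt | hge
        · exact absurd hv1 (ne_of_lt (hvstrict j1 j2 hj1.1 hlt (le_trans hj2.2 h2)))
        · have hlt : j2 < j1 := by omega
          exact absurd hv1.symm (ne_of_lt (hvstrict j2 j1 hj2.1 hlt (le_trans hj1.2 h2)))
      have hstep2 : ∑ j ∈ Finset.Icc 1 i, (pf j).2
          = ∑ q ∈ (Finset.Icc 1 i).image pf, q.2 := (Finset.sum_image hinj).symm
      have hsub : (Finset.Icc 1 i).image pf ⊆ S.filter (fun p => p.1 ≤ v i) := by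
        intro q hq
        rw [Finset.mem_image] at hq
        obtain ⟨j, hj, rfl⟩ := hq
        rw [Finset.mem_Icc] at hj
        refine Finset.mem_filter.2 ⟨hpfS j hj.1 (le_trans hj.2 h2), ?_⟩
        rw [hpf1 j hj.1 (le_trans hj.2 h2)]
        rcases eq_or_lt_of_le hj.2 with heq | hlt
        · rw [heq]
        · exact hvlemono j i hj.1 hj.2 h2
      have hstep3 : ∑ q ∈ (Finset.Icc 1 i).image pf, q.2
          ≤ ∑ p ∈ S.filter (fun p => p.1 ≤ v i), p.2 := by
        apply Finset.sum_le_sum_of_subset_of_nonneg hsub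
        intro q hq _
        exact (hS q (Finset.mem_filter.1 hq).1).2
      linarith
    -- LB2 : waiting of all points beyond X (i-1)
    have hLB2 : v i * lcW B (X (i-1) + 1) ≤ lineCost B S (v i) := by
      unfold lineCost
      have hsnn : 0 ≤ ∑ p ∈ S.filter (fun p => p.1 ≤ v i), p.2 :=
        Finset.sum_nonneg fun p hp => (hS p (Finset.mem_filter.1 hp).1).2
      have hvτ : v i = τ (X (i-1) + 1) := by
        have := hτblock (i-1) (by omega)
        rw [show i-1+1 = i by omega] at this
        exact this
      have hterm : ∀ x ∈ Finset.Icc (X (i-1) + 1) B,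
          (6:ℝ) ^ (B - x) * v i ≤ (6:ℝ) ^ (B - x) *
            sInf ({t : ℝ | ∃ p ∈ S, p.1 = t ∧ t ≤ v i ∧ (x : ℝ) ≤ p.2} ∪ {v i}) := by
        intro x hx
        rw [Finset.mem_Icc] at hx
        apply mul_le_mul_of_nonneg_left _ (by positivity)
        have hne : ({t : ℝ | ∃ p ∈ S, p.1 = t ∧ t ≤ v i ∧ (x : ℝ) ≤ p.2} ∪ {v i}).Nonempty :=
          ⟨v i, Set.mem_union_right _ rfl⟩
        apply le_csInf hne
        rintro b (⟨p, hp, rfl, hb1, hb2⟩ | rfl)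
        · calc v i = τ (X (i-1) + 1) := hvτ
            _ ≤ τ x := hτmono _ x (by omega) hx.1 hx.2
            _ ≤ p.1 := hτle x p hp hb2
        · exact le_refl _
      have hsum1 : v i * lcW B (X (i-1) + 1)
          = ∑ x ∈ Finset.Icc (X (i-1) + 1) B, (6:ℝ) ^ (B - x) * v i := by
        unfold lcW
        rw [Finset.mul_sum]
        apply Finset.sum_congr rfl
        intro x _; ring
      have hsub : Finset.Icc (X (i-1) + 1) B ⊆ Finset.Icc 1 B :=
        Finset.Icc_subset_Icc (by omega) (le_refl B)
      have hsum2 : ∑ x ∈ Finset.Icc (X (i-1) + 1) B, (6:ℝ) ^ (B - x) *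
            sInf ({t : ℝ | ∃ p ∈ S, p.1 = t ∧ t ≤ v i ∧ (x : ℝ) ≤ p.2} ∪ {v i})
          ≤ ∑ x ∈ Finset.Icc 1 B, (6:ℝ) ^ (B - x) *
            sInf ({t : ℝ | ∃ p ∈ S, p.1 = t ∧ t ≤ v i ∧ (x : ℝ) ≤ p.2} ∪ {v i}) := by
        apply Finset.sum_le_sum_of_subset_of_nonneg hsub
        intro x _ _
        exact mul_nonneg (by positivity) (wait_nonneg hS hθpos.le)
      have := Finset.sum_le_sum hterm
      linarith
    -- upper bounds via the optimum
    have hOPT_B : lineCost B S (v i) ≤ R * B := by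
      have := hkey (v i) hθpos B
      rw [lcW_succB] at this
      simpa using this
    have hP : v i * lcW B (X (i-1) + 1) ≤ R * B := le_trans hLB2 hOPT_B
    by_cases hyc : X (i-1) + K ≤ B
    · have h6K : (6:ℝ)^K * lcW B (X (i-1) + K + 1) ≤ lcW B (X (i-1) + 1) :=
        lcW_shift B _ K hyc
      have hBcast : (B:ℝ) = 6^n := by rw [hBdef]; push_cast; ring
      have hRB6K : R * B ≤ (6:ℝ)^K := by
        rw [hBcast, hKdef]
        have h6n : (0:ℝ) < 6^n := by positivity
        have : R * (6:ℝ)^n ≤ 4 * 6^n := mul_le_mul_of_nonneg_right hR4.le (le_of_lt h6n)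
        calc R * (6:ℝ)^n ≤ 4 * 6^n := this
          _ ≤ 36 * 6^n := by nlinarith
          _ = 6^(n+2) := by ring
      have hW1pos : 0 < lcW B (X (i-1) + 1) := lcW_pos B _ (by omega)
      have hW2nn : 0 ≤ lcW B (X (i-1) + K + 1) := lcW_nonneg B _
      have hwait : v i * lcW B (X (i-1) + K + 1) ≤ 1 := by
        have e1 : (v i * lcW B (X (i-1) + 1)) * lcW B (X (i-1) + K + 1)
            ≤ (R * B) * lcW B (X (i-1) + K + 1) :=
          mul_le_mul_of_nonneg_right hP hW2nn
        have e2 : (R * B) * lcW B (X (i-1) + K + 1)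
            ≤ (6:ℝ)^K * lcW B (X (i-1) + K + 1) :=
          mul_le_mul_of_nonneg_right hRB6K hW2nn
        nlinarith
      have hub := hkey (v i) hθpos (X (i-1) + K)
      have hcast : ((X (i-1) + K : ℕ) : ℝ) = (X (i-1) : ℝ) + K := by push_cast; ring
      rw [hcast] at hub
      have hfin : lineCost B S (v i) ≤ R * ((X (i-1) : ℝ) + K + 1) := by
        refine le_trans hub (mul_le_mul_of_nonneg_left ?_ hR0)
        linarith
      have : R * ((X (i-1) : ℝ) + K + 1) = R * X (i-1) + E := by
        rw [hEdef]; push_cast; ring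
      linarith [le_trans hLB1 hfin]
    · have hBle : (B:ℝ) ≤ (X (i-1) : ℝ) + K := by
        have : B ≤ X (i-1) + K := by omega
        exact_mod_cast this
      have h1 : R * (B:ℝ) ≤ R * ((X (i-1) : ℝ) + K) := mul_le_mul_of_nonneg_left hBle hR0
      have h2 : R * ((X (i-1) : ℝ) + K) ≤ R * X (i-1) + E := by
        rw [hEdef]; push_cast; nlinarith
      linarith [le_trans hLB1 hOPT_B]
  -- conclude by the arithmetic lemma
  have hE1 : (1:ℝ) ≤ E := by
    rw [hEdef]
    have : (1:ℝ) ≤ ((K+1 : ℕ):ℝ) := by exact_mod_cast Nat.one_le_iff_ne_zero.2 (by omega)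
    nlinarith
  have hfinal := rho_bound R E hR1 hR4 hE1 m X hX0 hCi
  rw [hm] at hfinal
  have hc2 : 4 * E ≤ 16 * ((n:ℝ) + 3) := by
    rw [hEdef, hKdef]
    push_cast
    nlinarith [Nat.cast_nonneg (α := ℝ) n]
  have hc3 : (16:ℝ) * 6^(M+1) * ((n:ℝ)+3) < B := by
    have := hn
    have hcast : ((16 * 6^(M+1) * (n + 3) : ℕ) : ℝ) < ((6^n : ℕ) : ℝ) := by
      exact_mod_cast this
    rw [hBdef]
    push_cast at hcast ⊢
    linarith
  have hpow : (0:ℝ) ≤ 6^(M+1) := by positivity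
  have hc4 : 4 * E * 6^(M+1) ≤ 16 * ((n:ℝ)+3) * 6^(M+1) :=
    mul_le_mul_of_nonneg_right hc2 hpow
  have : (B:ℝ) < (B:ℝ) := by
    calc (B:ℝ) ≤ 4 * E * 6^(M+1) := hfinal
      _ ≤ 16 * ((n:ℝ)+3) * 6^(M+1) := hc4
      _ = 16 * 6^(M+1) * ((n:ℝ)+3) := by ring
      _ < B := hc3
  exact absurd this (lt_irrefl _)

/-- Lower bound of `4` for online MLAP with linear waiting costs on the line (via
Single-Phase MLAP-L): for every `R < 4` there is a positive integer `B` such that for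
every schedule `S` there is an expiration time `θ > 0` at which the cost of `S` exceeds
`R` times the optimum cost for expiration time `θ`. -/
theorem stmt13 (R : ℝ) (hR : R < 4) :
    ∃ B : ℕ, 0 < B ∧
      ∀ S : Finset (ℝ × ℝ), (∀ p ∈ S, 0 ≤ p.1 ∧ 0 ≤ p.2) →
        ∃ θ : ℝ, 0 < θ ∧
          lineCost B S θ >
            R * sInf {c : ℝ | ∃ S' : Finset (ℝ × ℝ),
              (∀ p ∈ S', 0 ≤ p.1 ∧ 0 ≤ p.2) ∧ c = lineCost B S' θ} := by
  obtain ⟨B, hB, H⟩ := main_lb (max R 1) (le_max_right R 1) (max_lt hR (by norm_num))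
  refine ⟨B, hB, ?_⟩
  intro S hS
  obtain ⟨θ, hθ, hgt⟩ := H S hS
  refine ⟨θ, hθ, lt_of_le_of_lt ?_ hgt⟩
  have hOpt0 : 0 ≤ sInf {c : ℝ | ∃ S' : Finset (ℝ × ℝ),
      (∀ p ∈ S', 0 ≤ p.1 ∧ 0 ≤ p.2) ∧ c = lineCost B S' θ} := by
    apply Real.sInf_nonneg
    rintro c ⟨S', hS', rfl⟩
    exact lineCost_nonneg B S' θ hS' hθ.le
  exact mul_le_mul_of_nonneg_right (le_max_left R 1) hOpt0
end

section
/- Let 𝒥 be a finite set of pairs (a, d) ∈ ℝ × ℝ with a ≤ d, each representing the closed interval [a, d]. Let T ⊆ ℝ and O ⊆ ℝ be finite sets such that for every (a, d) ∈ 𝒥, T ∩ [a, d] ≠ ∅ and O ∩ [a, d] ≠ ∅. Then there exists T' ⊆ T with |T'| ≤ 2·|O| such that T' ∩ [a, d] ≠ ∅ for every (a, d) ∈ 𝒥. -/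
/-- Elements of `T` that are the greatest element `≤ o`. -/
noncomputable def belowSet (T : Finset ℝ) (o : ℝ) : Finset ℝ :=
  T.filter (fun t => t ≤ o ∧ ∀ u ∈ T, u ≤ o → u ≤ t)

/-- Elements of `T` that are the least element `≥ o`. -/
noncomputable def aboveSet (T : Finset ℝ) (o : ℝ) : Finset ℝ :=
  T.filter (fun t => o ≤ t ∧ ∀ u ∈ T, o ≤ u → t ≤ u)

lemma belowSet_card_le (T : Finset ℝ) (o : ℝ) : (belowSet T o).card ≤ 1 := by
  apply Finset.card_le_one.mpr
  intro a ha b hb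
  simp only [belowSet, Finset.mem_filter] at ha hb
  exact le_antisymm (hb.2.2 a ha.1 ha.2.1) (ha.2.2 b hb.1 hb.2.1)

lemma aboveSet_card_le (T : Finset ℝ) (o : ℝ) : (aboveSet T o).card ≤ 1 := by
  apply Finset.card_le_one.mpr
  intro a ha b hb
  simp only [aboveSet, Finset.mem_filter] at ha hb
  exact le_antisymm (ha.2.2 b hb.1 hb.2.1) (hb.2.2 a ha.1 ha.2.1)

/-- The key combinatorial step in the analysis of the offline 2-approximation
algorithm LBL for MLAP-D: if a finite set `T` of times and a finite set `O` of times
both hit every interval `[a, d]` of the finite family `𝒥`, then `T` has a subset `T'`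
of cardinality at most `2·|O|` that still hits every interval of `𝒥`. -/
theorem stmt14 (𝒥 : Finset (ℝ × ℝ)) (h𝒥 : ∀ p ∈ 𝒥, p.1 ≤ p.2)
    (T O : Finset ℝ)
    (hT : ∀ p ∈ 𝒥, ∃ s ∈ T, p.1 ≤ s ∧ s ≤ p.2)
    (hO : ∀ p ∈ 𝒥, ∃ s ∈ O, p.1 ≤ s ∧ s ≤ p.2) :
    ∃ T' ⊆ T, T'.card ≤ 2 * O.card ∧ ∀ p ∈ 𝒥, ∃ s ∈ T', p.1 ≤ s ∧ s ≤ p.2 := by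
  classical
  refine ⟨O.biUnion (fun o => belowSet T o ∪ aboveSet T o), ?_, ?_, ?_⟩
  · intro x hx
    simp only [Finset.mem_biUnion, Finset.mem_union, belowSet, aboveSet,
      Finset.mem_filter] at hx
    obtain ⟨o, -, h | h⟩ := hx <;> exact h.1
  · calc (O.biUnion (fun o => belowSet T o ∪ aboveSet T o)).card
        ≤ ∑ o ∈ O, (belowSet T o ∪ aboveSet T o).card := Finset.card_biUnion_le
      _ ≤ ∑ o ∈ O, 2 := by
          apply Finset.sum_le_sum
          intro o _
          calc (belowSet T o ∪ aboveSet T o).card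
              ≤ (belowSet T o).card + (aboveSet T o).card := Finset.card_union_le _ _
            _ ≤ 1 + 1 := add_le_add (belowSet_card_le T o) (aboveSet_card_le T o)
      _ = 2 * O.card := by rw [Finset.sum_const, smul_eq_mul, mul_comm]
  · intro p hp
    obtain ⟨t, htT, hat, htd⟩ := hT p hp
    obtain ⟨o, hoO, hao, hod⟩ := hO p hp
    rcases le_total t o with hto | hot
    · -- take the greatest element of T that is ≤ o
      have hne : (T.filter (fun u => u ≤ o)).Nonempty := ⟨t, by simp [htT, hto]⟩
      set m := (T.filter (fun u => u ≤ o)).max' hne with hm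
      have hmmem := (T.filter (fun u => u ≤ o)).max'_mem hne
      simp only [Finset.mem_filter] at hmmem
      have hmbelow : m ∈ belowSet T o := by
        simp only [belowSet, Finset.mem_filter]
        exact ⟨hmmem.1, hmmem.2, fun u hu huo =>
          Finset.le_max' _ u (by simp [hu, huo])⟩
      refine ⟨m, Finset.mem_biUnion.mpr ⟨o, hoO, Finset.mem_union_left _ hmbelow⟩, ?_, ?_⟩
      · exact le_trans hat (Finset.le_max' _ t (by simp [htT, hto]))
      · exact le_trans hmmem.2 hod
    · -- take the least element of T that is ≥ o
      have hne : (T.filter (fun u => o ≤ u)).Nonempty := ⟨t, by simp [htT, hot]⟩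
      set m := (T.filter (fun u => o ≤ u)).min' hne with hm
      have hmmem := (T.filter (fun u => o ≤ u)).min'_mem hne
      simp only [Finset.mem_filter] at hmmem
      have habove : m ∈ aboveSet T o := by
        simp only [aboveSet, Finset.mem_filter]
        exact ⟨hmmem.1, hmmem.2, fun u hu huo =>
          Finset.min'_le _ u (by simp [hu, huo])⟩
      refine ⟨m, Finset.mem_biUnion.mpr ⟨o, hoO, Finset.mem_union_right _ habove⟩, ?_, ?_⟩
      · exact le_trans hao hmmem.2
      · exact le_trans (Finset.min'_le _ t (by simp [htT, hot])) htd
end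

section
/- Let (V, r, par) be a finite rooted tree and ℓ : V → ℝ with ℓ r = 0 and ℓ v ≥ 0 for all v. For each v ∈ V let 𝒥_v be a finite set of pairs (a, d) ∈ ℝ × ℝ with a ≤ d (closed intervals) such that 𝒥_v ⊆ 𝒥_{par v} for every v ≠ r. Say a finite set T ⊆ ℝ hits 𝒥_v if T ∩ [a, d] ≠ ∅ for every (a, d) ∈ 𝒥_v. Let O assign to each v ∈ V a finite set O_v ⊆ ℝ such that O_v ⊆ O_{par v} for every v ≠ r and O_v hits 𝒥_v for every v. Let S assign to each v ∈ V a finite set S_v ⊆ ℝ such that S_r hits 𝒥_r, and for every v ≠ r: S_v ⊆ S_{par v}, S_v hits 𝒥_v, and S_v has minimum cardinality among all subsets of S_{par v} that hit 𝒥_v. Then ∑_{v∈V} ℓ v · |S_v| ≤ 2 · ∑_{v∈V} ℓ v · |O_v|. -/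
/-- A finite set `T` of times hits the family `J` of closed intervals `[a, d]`
(given as pairs) if it intersects each of them. -/
def Hits (T : Finset ℝ) (J : Finset (ℝ × ℝ)) : Prop :=
  ∀ p ∈ J, ∃ s ∈ T, p.1 ≤ s ∧ s ≤ p.2

lemma hits_mono {T : Finset ℝ} {J J' : Finset (ℝ × ℝ)} (h : Hits T J) (hJ : J' ⊆ J) :
    Hits T J' := fun p hp => h p (hJ hp)

lemma key_s15 (B A : Finset ℝ) (J : Finset (ℝ × ℝ)) (hB : Hits B J) (hA : Hits A J) :
    ∃ T ⊆ B, Hits T J ∧ T.card ≤ 2 * A.card := by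
  classical
  set g : ℝ → Finset ℝ := fun a =>
    (if h : (B.filter (· ≤ a)).Nonempty then {(B.filter (· ≤ a)).max' h} else ∅) ∪
    (if h : (B.filter (a ≤ ·)).Nonempty then {(B.filter (a ≤ ·)).min' h} else ∅) with hg
  refine ⟨A.biUnion g, ?_, ?_, ?_⟩
  · intro x hx
    simp only [Finset.mem_biUnion] at hx
    obtain ⟨a, _, hx⟩ := hx
    rw [hg] at hx
    simp only [Finset.mem_union] at hx
    rcases hx with hx | hx <;> split_ifs at hx with h <;> simp_all
    · exact (Finset.mem_filter.mp ((B.filter (· ≤ a)).max'_mem h)).1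
    · exact (Finset.mem_filter.mp ((B.filter (a ≤ ·)).min'_mem h)).1
  · intro p hp
    obtain ⟨a, ha, hpa1, hpa2⟩ := hA p hp
    obtain ⟨b, hb, hpb1, hpb2⟩ := hB p hp
    rcases le_total b a with hba | hab
    · have hne : (B.filter (· ≤ a)).Nonempty := ⟨b, Finset.mem_filter.mpr ⟨hb, hba⟩⟩
      set m := (B.filter (· ≤ a)).max' hne with hm
      have hmmem := (B.filter (· ≤ a)).max'_mem hne
      rw [Finset.mem_filter] at hmmem
      refine ⟨m, ?_, le_trans hpb1 (Finset.le_max' (B.filter (· ≤ a)) b (Finset.mem_filter.mpr ⟨hb, hba⟩)),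
        le_trans hmmem.2 hpa2⟩
      exact Finset.mem_biUnion.mpr ⟨a, ha, by rw [hg]; simp [hne]; exact Or.inl rfl⟩
    · have hne : (B.filter (a ≤ ·)).Nonempty := ⟨b, Finset.mem_filter.mpr ⟨hb, hab⟩⟩
      set m := (B.filter (a ≤ ·)).min' hne with hm
      have hmmem := (B.filter (a ≤ ·)).min'_mem hne
      rw [Finset.mem_filter] at hmmem
      refine ⟨m, ?_, le_trans hpa1 hmmem.2,
        le_trans (Finset.min'_le (B.filter (a ≤ ·)) b (Finset.mem_filter.mpr ⟨hb, hab⟩)) hpb2⟩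
      exact Finset.mem_biUnion.mpr ⟨a, ha, by rw [hg]; simp [hne]; exact Or.inl rfl⟩
  · calc (A.biUnion g).card ≤ ∑ a ∈ A, (g a).card := Finset.card_biUnion_le
      _ ≤ ∑ _a ∈ A, 2 := Finset.sum_le_sum (fun a _ => by
          rw [hg]
          refine le_trans (Finset.card_union_le _ _) ?_
          have h1 : ∀ (c : Prop) [Decidable c] (s : Finset ℝ),
            (if _ : c then s else ∅).card ≤ s.card := by
            intro c _ s; split_ifs <;> simp
          split_ifs <;> simp)
      _ = 2 * A.card := by rw [Finset.sum_const, smul_eq_mul, mul_comm]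

/-- Algorithm LBL is a 2-approximation for offline MLAP-D. `(V, r, par)` is a finite
rooted tree; `𝒥 v` is the set of `[arrival, deadline]` intervals of the requests in the
subtree of `v` (nested along edges); `O` encodes a feasible (e.g. optimal) schedule and
`S` the schedule produced by the level-by-level earliest-deadline algorithm LBL, which
for each non-root `v` picks a minimum-cardinality subset of the parent's service times
hitting `𝒥 v`. Then the cost of `S` is at most twice the cost of `O`. -/
theorem stmt15 {V : Type*} [Fintype V] [DecidableEq V]
    (r : V) (par : V → V) (hroot : par r = r) (hreach : ∀ v, ∃ n : ℕ, par^[n] v = r)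
    (ℓ : V → ℝ) (hℓr : ℓ r = 0) (hℓ : ∀ v, 0 ≤ ℓ v)
    (𝒥 : V → Finset (ℝ × ℝ)) (h𝒥int : ∀ v, ∀ p ∈ 𝒥 v, p.1 ≤ p.2)
    (h𝒥nest : ∀ v, v ≠ r → 𝒥 v ⊆ 𝒥 (par v))
    (O : V → Finset ℝ) (hOnest : ∀ v, v ≠ r → O v ⊆ O (par v))
    (hOhits : ∀ v, Hits (O v) (𝒥 v))
    (S : V → Finset ℝ) (hSr : Hits (S r) (𝒥 r))
    (hSnest : ∀ v, v ≠ r → S v ⊆ S (par v))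
    (hShits : ∀ v, v ≠ r → Hits (S v) (𝒥 v))
    (hSmin : ∀ v, v ≠ r → ∀ T ⊆ S (par v), Hits T (𝒥 v) → (S v).card ≤ T.card) :
    ∑ v : V, ℓ v * ((S v).card : ℝ) ≤ 2 * ∑ v : V, ℓ v * ((O v).card : ℝ) := by
  rw [Finset.mul_sum]
  refine Finset.sum_le_sum (fun v _ => ?_)
  by_cases hv : v = r
  · subst hv; rw [hℓr]; simp
  · have hpar : Hits (S (par v)) (𝒥 v) := by
      by_cases hp : par v = r
      · exact hits_mono (hp ▸ hSr) (hp ▸ h𝒥nest v hv)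
      · exact hits_mono (hShits (par v) hp) (h𝒥nest v hv)
    obtain ⟨T, hTsub, hThits, hTcard⟩ := key_s15 (S (par v)) (O v) (𝒥 v) hpar (hOhits v)
    have hcard : (S v).card ≤ 2 * (O v).card :=
      le_trans (hSmin v hv T hTsub hThits) hTcard
    have : ((S v).card : ℝ) ≤ 2 * ((O v).card : ℝ) := by exact_mod_cast hcard
    calc ℓ v * ((S v).card : ℝ) ≤ ℓ v * (2 * ((O v).card : ℝ)) :=
          mul_le_mul_of_nonneg_left this (hℓ v)
      _ = 2 * (ℓ v * ((O v).card : ℝ)) := by ring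
end

section
/- Let (V, r, par) be a finite rooted tree in which every node has depth at most D (where depth v is the least n with par^[n] v = r), let ℓ : V → ℝ with ℓ r = 0 and ℓ v > 0 for all v ≠ r, and let L ≥ 1. Define par' : V → V by: par' r = r, and for u ≠ r, par' u is the strict ancestor w of u closest to u (i.e., of largest depth) satisfying ℓ w ≥ L · ℓ u, and par' u = r if no strict ancestor of u satisfies this. Then: (1) (V, r, par') is a finite rooted tree in which every node has depth at most D; (2) it is L-decreasing: for every u ≠ r with par' u ≠ r, ℓ (par' u) ≥ L · ℓ u; (3) for every set X ⊆ V with r ∈ X and par' u ∈ X for all u ∈ X, the set X' = X ∪ { w | ∃ u ∈ X, w is a strict ancestor of u and a strict descendant of par' u (with respect to par) } contains r, satisfies par u ∈ X' for all u ∈ X', and ℓ(X') ≤ D · L · ℓ(X). -/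
open scoped Classical

/-- `w` is a strict ancestor of `u`: an ancestor distinct from `u`. -/
def IsStrictAnc {V : Type*} (par : V → V) (w u : V) : Prop := IsDesc par u w ∧ w ≠ u

/-- The reduction to `L`-decreasing trees underlying Theorem 3.1. `par'` reconnects
each non-root node `u` to its closest strict ancestor `w` with `ℓ w ≥ L · ℓ u`
("closest" meaning every qualifying strict ancestor of `u` is an ancestor of `par' u`),
or to the root if no such ancestor exists. Then: (1) `(V, r, par')` is a finite rooted
tree of depth at most `D`; (2) it is `L`-decreasing; (3) every service subtree `X` of
`(V, r, par')` extends, by adding the original intermediate nodes, to a service subtree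
`X'` of `(V, r, par)` of weight at most `D · L · ℓ(X)`. -/
theorem stmt16 {V : Type*} [Fintype V] [DecidableEq V]
    (r : V) (par : V → V) (D : ℕ)
    (hroot : par r = r) (hdepth : ∀ v, ∃ n ≤ D, par^[n] v = r)
    (ℓ : V → ℝ) (hℓr : ℓ r = 0) (hℓ : ∀ v, v ≠ r → 0 < ℓ v)
    (L : ℝ) (hL : 1 ≤ L)
    (par' : V → V) (hpr : par' r = r)
    (hpar' : ∀ u, u ≠ r →
      ((IsStrictAnc par (par' u) u ∧ L * ℓ u ≤ ℓ (par' u) ∧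
          ∀ w, IsStrictAnc par w u → L * ℓ u ≤ ℓ w → IsDesc par (par' u) w) ∨
        ((∀ w, IsStrictAnc par w u → ¬ L * ℓ u ≤ ℓ w) ∧ par' u = r))) :
    (∀ v, ∃ n ≤ D, par'^[n] v = r) ∧
    (∀ u, u ≠ r → par' u ≠ r → L * ℓ u ≤ ℓ (par' u)) ∧
    (∀ X : Finset V, r ∈ X → (∀ u ∈ X, par' u ∈ X) →
      let X' : Finset V := X ∪ Finset.univ.filter (fun w => ∃ u ∈ X,
        IsStrictAnc par w u ∧ IsDesc par w (par' u) ∧ w ≠ par' u)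
      r ∈ X' ∧ (∀ u ∈ X', par u ∈ X') ∧
        ∑ u ∈ X', ℓ u ≤ (D : ℝ) * L * ∑ u ∈ X, ℓ u) := by
  have hfix : ∀ m, par^[m] r = r := fun m => Function.iterate_fixed hroot m
  have hex : ∀ v : V, ∃ n, par^[n] v = r := fun v => (hdepth v).imp (fun n h => h.2)
  set d : V → ℕ := fun v => Nat.find (hex v) with hd
  have hdspec : ∀ v, par^[d v] v = r := fun v => Nat.find_spec (hex v)
  have hdD : ∀ v, d v ≤ D := by
    intro v; obtain ⟨n, hn, hr⟩ := hdepth v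
    exact le_trans (Nat.find_min' (hex v) hr) hn
  have hd0 : ∀ v, d v = 0 → v = r := by
    intro v h0
    have := hdspec v
    rw [h0] at this
    simpa using this
  have hdpos : ∀ v, v ≠ r → 1 ≤ d v := by
    intro v hv
    rcases Nat.eq_zero_or_pos (d v) with h | h
    · exact absurd (hd0 v h) hv
    · exact h
  -- key: if par^[k] v ≠ r then k < d v
  have hlt : ∀ (v : V) (k : ℕ), par^[k] v ≠ r → k < d v := by
    intro v k hk
    by_contra h
    push_neg at h
    apply hk
    have : k = (k - d v) + d v := by omega
    rw [this, Function.iterate_add_apply, hdspec v, hfix]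
  -- no nontrivial cycles
  have hnocyc : ∀ (v : V) (k : ℕ), par^[k] v = v → v ≠ r → k = 0 := by
    intro v k hk hv
    by_contra hk0
    have hge : d v ≤ k * d v := Nat.le_mul_of_pos_left _ (Nat.pos_of_ne_zero hk0)
    have h1 : par^[k * d v] v = v := by
      rw [Function.iterate_mul]
      exact Function.iterate_fixed hk (d v)
    have h2 : par^[k * d v] v = r := by
      have : k * d v = (k * d v - d v) + d v := by omega
      rw [this, Function.iterate_add_apply, hdspec v, hfix]
    exact hv (h1 ▸ h2)
  -- depth of a proper ancestor is smaller
  have hdlt : ∀ (u : V) (k : ℕ), 1 ≤ k → u ≠ r → d (par^[k] u) < d u := by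
    intro u k hk hu
    by_cases hw : par^[k] u = r
    · rw [hw]
      have : d r = 0 := by
        have : d r ≤ 0 := Nat.find_min' (hex r) (by simp)
        omega
      rw [this]; exact hdpos u hu
    · have hkd : k < d u := hlt u k hw
      have : par^[d u - k] (par^[k] u) = r := by
        rw [← Function.iterate_add_apply]
        have : d u - k + k = d u := by omega
        rw [this]; exact hdspec u
      have h3 : d (par^[k] u) ≤ d u - k := Nat.find_min' (hex (par^[k] u)) this
      omega
  have hstrict_k : ∀ w u : V, IsStrictAnc par w u → ∃ k, 1 ≤ k ∧ par^[k] u = w := by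
    rintro w u ⟨⟨k, hk⟩, hne⟩
    refine ⟨k, ?_, hk⟩
    rcases Nat.eq_zero_or_pos k with h | h
    · rw [h] at hk; simp at hk; exact absurd hk.symm hne
    · exact h
  have hdlt' : ∀ u, u ≠ r → d (par' u) < d u := by
    intro u hu
    rcases hpar' u hu with ⟨hanc, _, _⟩ | ⟨_, hpru⟩
    · obtain ⟨k, hk1, hk⟩ := hstrict_k _ _ hanc
      rw [← hk]; exact hdlt u k hk1 hu
    · rw [hpru]
      have : d r = 0 := by
        have : d r ≤ 0 := Nat.find_min' (hex r) (by simp)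
        omega
      rw [this]; exact hdpos u hu
  -- Part 1
  have part1' : ∀ (m : ℕ) (v : V), d v ≤ m → ∃ n ≤ d v, par'^[n] v = r := by
    intro m
    induction m with
    | zero =>
      intro v hv
      refine ⟨0, Nat.zero_le _, ?_⟩
      simpa using hd0 v (Nat.le_zero.mp hv)
    | succ m ih =>
      intro v hv
      by_cases hvr : v = r
      · exact ⟨0, Nat.zero_le _, by simpa using hvr⟩
      · have hlt2 := hdlt' v hvr
        obtain ⟨n, hn, hnr⟩ := ih (par' v) (by omega)
        refine ⟨n + 1, by omega, ?_⟩
        rw [Function.iterate_succ_apply]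
        exact hnr
  refine ⟨?_, ?_, ?_⟩
  · intro v
    obtain ⟨n, hn, hnr⟩ := part1' (d v) v le_rfl
    exact ⟨n, le_trans hn (hdD v), hnr⟩
  -- Part 2
  · intro u hu hpu
    rcases hpar' u hu with ⟨_, hge, _⟩ | ⟨_, hpru⟩
    · exact hge
    · exact absurd hpru hpu
  -- Part 3
  · intro X hrX hclosed
    intro X'
    -- basic facts
    have hxner : ∀ w x : V, IsStrictAnc par w x → x ≠ r := by
      rintro w x ⟨⟨n, hn⟩, hne⟩ rfl
      rw [hfix] at hn
      exact hne hn.symm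
    have hdesc_par : ∀ v t : V, IsDesc par v t → v ≠ t → IsDesc par (par v) t := by
      rintro v t ⟨m, hm⟩ hvt
      match m, hm with
      | 0, hm => exact absurd hm hvt
      | m + 1, hm =>
        rw [Function.iterate_succ_apply] at hm
        exact ⟨m, hm⟩
    -- weight of intermediate nodes
    have hB : ∀ w x : V, IsStrictAnc par w x → IsDesc par w (par' x) → w ≠ par' x →
        ℓ w < L * ℓ x := by
      intro w x hsa hdes hne
      have hx : x ≠ r := hxner w x hsa
      have hℓx : 0 < ℓ x := hℓ x hx
      rcases hpar' x hx with ⟨_, _, hclose⟩ | ⟨hnone, _⟩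
      · by_contra h
        push_neg at h
        obtain ⟨k, hk⟩ := hclose w hsa h
        obtain ⟨m, hm⟩ := hdes
        have hwr : w ≠ r := by
          intro hwr
          rw [hwr, hℓr] at h
          nlinarith
        have hcyc : par^[k + m] w = w := by
          rw [Function.iterate_add_apply, hm, hk]
        have := hnocyc w (k + m) hcyc hwr
        have hm0 : m = 0 := by omega
        rw [hm0] at hm
        exact hne (by simpa using hm)
      · have := hnone w hsa
        linarith
    have hℓnn : ∀ v : V, 0 ≤ ℓ v := by
      intro v
      by_cases hv : v = r
      · rw [hv, hℓr]
      · exact le_of_lt (hℓ v hv)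
    -- membership characterization
    have hmemX' : ∀ w : V, w ∈ X' ↔ w ∈ X ∨ ∃ u ∈ X,
        IsStrictAnc par w u ∧ IsDesc par w (par' u) ∧ w ≠ par' u := by
      intro w
      simp only [X', Finset.mem_union, Finset.mem_filter, Finset.mem_univ, true_and]
    -- uniform facts about par'
    have hE : ∀ u : V, u ≠ r → IsDesc par u (par' u) ∧ u ≠ par' u := by
      intro u hu
      rcases hpar' u hu with ⟨⟨hdes, hne⟩, _, _⟩ | ⟨_, hpru⟩
      · exact ⟨hdes, Ne.symm hne⟩
      · exact ⟨⟨d u, by rw [hpru]; exact hdspec u⟩, by rw [hpru]; exact hu⟩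
    -- closure helper
    have hD : ∀ x u : V, x ∈ X → x ≠ r → IsDesc par x u → IsDesc par u (par' x) →
        u ≠ par' x → par u ∈ X' := by
      intro x u hxX hxr hxu hupx hne
      by_cases h : par u = par' x
      · rw [h, hmemX']
        exact Or.inl (hclosed x hxX)
      · rw [hmemX']
        refine Or.inr ⟨x, hxX, ⟨?_, ?_⟩, hdesc_par u (par' x) hupx hne, h⟩
        · obtain ⟨j, hj⟩ := hxu
          exact ⟨j + 1, by rw [Function.iterate_succ_apply', hj]⟩
        · intro hpux
          obtain ⟨j, hj⟩ := hxu
          have : par^[j + 1] x = x := by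
            rw [Function.iterate_succ_apply', hj, hpux]
          have := hnocyc x (j + 1) this hxr
          omega
    refine ⟨(hmemX' r).mpr (Or.inl hrX), ?_, ?_⟩
    · -- closure under par
      intro u hu
      rw [hmemX'] at hu
      rcases hu with huX | ⟨x, hxX, hsa, hdes, hne⟩
      · by_cases hur : u = r
        · rw [hur, hroot, hmemX']
          exact Or.inl hrX
        · obtain ⟨h1, h2⟩ := hE u hur
          exact hD u u huX hur ⟨0, rfl⟩ h1 h2
      · exact hD x u hxX (hxner u x hsa) hsa.1 hdes hne
    · -- sum bound
      set f : V → V := fun w =>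
        if w ∈ X then w
        else if h : ∃ u ∈ X, IsStrictAnc par w u ∧ IsDesc par w (par' u) ∧ w ≠ par' u
          then h.choose else r with hf
      have hmaps : ∀ w ∈ X', f w ∈ X := by
        intro w hw
        rw [hmemX'] at hw
        by_cases hwX : w ∈ X
        · simp [hf, hwX]
        · have hex2 : ∃ u ∈ X, IsStrictAnc par w u ∧ IsDesc par w (par' u) ∧ w ≠ par' u :=
            hw.resolve_left hwX
          simp only [hf, hwX, if_false, dif_pos hex2]
          exact hex2.choose_spec.1
      have hsum := Finset.sum_fiberwise_of_maps_to hmaps ℓ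
      rw [← hsum]
      have hbound : ∀ x ∈ X, ∑ w ∈ X'.filter (fun w => f w = x), ℓ w ≤ (D : ℝ) * L * ℓ x := by
        intro x hxX
        by_cases hxr : x = r
        · -- fiber over r is contained in {r}
          have hsub : X'.filter (fun w => f w = x) ⊆ {r} := by
            intro w hw
            rw [Finset.mem_filter] at hw
            obtain ⟨hwX', hfw⟩ := hw
            rw [Finset.mem_singleton]
            by_cases hwX : w ∈ X
            · have : f w = w := by simp [hf, hwX]
              rw [this] at hfw
              rw [hfw, hxr]
            · have hex2 : ∃ u ∈ X, IsStrictAnc par w u ∧ IsDesc par w (par' u) ∧ w ≠ par' u :=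
                ((hmemX' w).mp hwX').resolve_left hwX
              have : f w = hex2.choose := by simp only [hf, hwX, if_false, dif_pos hex2]
              rw [this] at hfw
              have hspec := hex2.choose_spec.2.1
              rw [hfw, hxr] at hspec
              exact absurd (hxner w r hspec) (fun h => h rfl)
          calc ∑ w ∈ X'.filter (fun w => f w = x), ℓ w
              ≤ ∑ w ∈ ({r} : Finset V), ℓ w :=
                Finset.sum_le_sum_of_subset_of_nonneg hsub (fun i _ _ => hℓnn i)
            _ = 0 := by simp [hℓr]
            _ ≤ (D : ℝ) * L * ℓ x := by
                rw [hxr, hℓr]; ring_nf; exact le_refl 0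
        · -- fiber over x ≠ r
          have hterm : ∀ w ∈ X'.filter (fun w => f w = x), ℓ w ≤ L * ℓ x := by
            intro w hw
            rw [Finset.mem_filter] at hw
            obtain ⟨hwX', hfw⟩ := hw
            by_cases hwX : w ∈ X
            · have : f w = w := by simp [hf, hwX]
              rw [this] at hfw
              rw [hfw]
              nlinarith [hℓnn x]
            · have hex2 : ∃ u ∈ X, IsStrictAnc par w u ∧ IsDesc par w (par' u) ∧ w ≠ par' u :=
                ((hmemX' w).mp hwX').resolve_left hwX
              have hcf : f w = hex2.choose := by simp only [hf, hwX, if_false, dif_pos hex2]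
              rw [hcf] at hfw
              obtain ⟨_, hsa, hdes, hne⟩ := hex2.choose_spec
              rw [hfw] at hsa hdes hne
              exact le_of_lt (hB w x hsa hdes hne)
          have hcard : (X'.filter (fun w => f w = x)).card ≤ D := by
            have hsub : X'.filter (fun w => f w = x) ⊆
                (Finset.range D).image (fun k => par^[k] x) := by
              intro w hw
              rw [Finset.mem_filter] at hw
              obtain ⟨hwX', hfw⟩ := hw
              rw [Finset.mem_image]
              by_cases hwX : w ∈ X
              · have : f w = w := by simp [hf, hwX]
                rw [this] at hfw
                refine ⟨0, ?_, by simp [hfw]⟩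
                rw [Finset.mem_range]
                have := hdpos x hxr
                have := hdD x
                omega
              · have hex2 : ∃ u ∈ X, IsStrictAnc par w u ∧ IsDesc par w (par' u) ∧ w ≠ par' u :=
                  ((hmemX' w).mp hwX').resolve_left hwX
                have hcf : f w = hex2.choose := by simp only [hf, hwX, if_false, dif_pos hex2]
                rw [hcf] at hfw
                obtain ⟨_, hsa, _, _⟩ := hex2.choose_spec
                rw [hfw] at hsa
                obtain ⟨j, hj⟩ := hsa.1
                have hwr : w ≠ r := fun h => hwX (h ▸ hrX)
                have hjlt : j < d x := hlt x j (by rw [hj]; exact hwr)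
                refine ⟨j, ?_, hj⟩
                rw [Finset.mem_range]
                have := hdD x
                omega
            calc (X'.filter (fun w => f w = x)).card
                ≤ ((Finset.range D).image (fun k => par^[k] x)).card :=
                  Finset.card_le_card hsub
              _ ≤ (Finset.range D).card := Finset.card_image_le
              _ = D := Finset.card_range D
          have h1 := Finset.sum_le_card_nsmul (X'.filter (fun w => f w = x)) ℓ (L * ℓ x) hterm
          rw [nsmul_eq_mul] at h1
          have h2 : ((X'.filter (fun w => f w = x)).card : ℝ) * (L * ℓ x) ≤
              (D : ℝ) * (L * ℓ x) := by
            apply mul_le_mul_of_nonneg_right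
            · exact_mod_cast hcard
            · have := hℓnn x; nlinarith
          calc ∑ w ∈ X'.filter (fun w => f w = x), ℓ w
              ≤ ((X'.filter (fun w => f w = x)).card : ℝ) * (L * ℓ x) := h1
            _ ≤ (D : ℝ) * (L * ℓ x) := h2
            _ = (D : ℝ) * L * ℓ x := by ring
      calc ∑ x ∈ X, ∑ w ∈ X'.filter (fun w => f w = x), ℓ w
          ≤ ∑ x ∈ X, (D : ℝ) * L * ℓ x := Finset.sum_le_sum hbound
        _ = (D : ℝ) * L * ∑ x ∈ X, ℓ x := by rw [Finset.mul_sum]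
end

section
/- Let (V, r, par) be a finite rooted tree and ℓ, w : V → ℝ with ℓ u ≥ 0 and w u ≥ 0 for all u. For z ∈ V let A_z be the union of all covered subtrees rooted at z. Then: (1) A_z is a covered subtree rooted at z, and every covered subtree rooted at z is contained in A_z; (2) for every subtree Z rooted at z, ∑_{u∈Z} w u − ℓ(Z ∖ {z}) ≤ ∑_{u∈A_z} w u − ℓ(A_z ∖ {z}); (3) consequently, if some subtree Z rooted at z satisfies ∑_{u∈Z} w u ≥ ℓ(Z), then ∑_{u∈A_z} w u ≥ ℓ(A_z). -/
open scoped Classical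

section Aux

variable {V : Type*}

lemma isDesc_refl (par : V → V) (u : V) : IsDesc par u u := ⟨0, rfl⟩

lemma isDesc_trans_s17 {par : V → V} {a b c : V} (h1 : IsDesc par a b) (h2 : IsDesc par b c) :
    IsDesc par a c := by
  obtain ⟨m, hm⟩ := h1; obtain ⟨n, hn⟩ := h2
  exact ⟨n + m, by rw [Function.iterate_add_apply, hm, hn]⟩

lemma isDesc_par {par : V → V} {a b : V} (h : IsDesc par a b) (hne : a ≠ b) :
    IsDesc par (par a) b := by
  obtain ⟨n, hn⟩ := h
  cases n with
  | zero => exact absurd hn hne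
  | succ n => exact ⟨n, by rw [← Function.iterate_succ_apply]; exact hn⟩

lemma isDesc_of_par {par : V → V} {a b : V} (h : IsDesc par (par a) b) :
    IsDesc par a b := by
  obtain ⟨n, hn⟩ := h
  exact ⟨n + 1, by rw [Function.iterate_succ_apply]; exact hn⟩

lemma eq_root_of_cycle {par : V → V} {r : V} (hroot : par r = r)
    (hreach : ∀ v, ∃ n : ℕ, par^[n] v = r) {v : V} {c : ℕ} (hc : 0 < c)
    (hcyc : par^[c] v = v) : v = r := by
  obtain ⟨N, hN⟩ := hreach v
  have hmul : ∀ j : ℕ, par^[j * c] v = v := by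
    intro j
    induction j with
    | zero => simp
    | succ j ih => rw [Nat.succ_mul, Function.iterate_add_apply, hcyc, ih]
  have hle : N ≤ N * c := Nat.le_mul_of_pos_right N hc
  have h1 : N * c - N + N = N * c := Nat.sub_add_cancel hle
  calc v = par^[N * c] v := (hmul N).symm
    _ = par^[N * c - N] (par^[N] v) := by rw [← Function.iterate_add_apply, h1]
    _ = par^[N * c - N] r := by rw [hN]
    _ = r := Function.iterate_fixed hroot _

lemma isDesc_antisymm {par : V → V} {r : V} (hroot : par r = r)
    (hreach : ∀ v, ∃ n : ℕ, par^[n] v = r) {a b : V}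
    (h1 : IsDesc par a b) (h2 : IsDesc par b a) : a = b := by
  obtain ⟨m, hm⟩ := h1; obtain ⟨n, hn⟩ := h2
  rcases Nat.eq_zero_or_pos (n + m) with h | h
  · have hm0 : m = 0 := by omega
    rw [hm0] at hm; exact hm
  · have hcyc : par^[n + m] a = a := by
      rw [Function.iterate_add_apply, hm, hn]
    have ha : a = r := eq_root_of_cycle hroot hreach h hcyc
    have hb : b = r := by rw [← hm, ha, Function.iterate_fixed hroot]
    rw [ha, hb]

/-- If `par^[m] u = z`, `u` is a descendant of `x`, and `x` is a descendant of `z`,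
then `x` appears among the first `m` iterates of `par` on `u`. -/
lemma exists_iterate_eq {par : V → V} {r : V} (hroot : par r = r)
    (hreach : ∀ v, ∃ n : ℕ, par^[n] v = r) {u x z : V} {m : ℕ}
    (hm : par^[m] u = z) (hux : IsDesc par u x) (hxz : IsDesc par x z) :
    ∃ k ≤ m, par^[k] u = x := by
  obtain ⟨a, ha⟩ := hux
  rcases le_or_gt a m with h | h
  · exact ⟨a, h, ha⟩
  · have hx : par^[a - m] z = x := by
      rw [← hm, ← Function.iterate_add_apply, Nat.sub_add_cancel h.le, ha]
    obtain ⟨p, hp⟩ := hxz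
    have hcyc : par^[p + (a - m)] z = z := by
      rw [Function.iterate_add_apply, hx, hp]
    have hz : z = r := eq_root_of_cycle hroot hreach (by omega) hcyc
    have hxz' : x = z := by rw [← hx, hz, Function.iterate_fixed hroot]
    exact ⟨m, le_refl m, by rw [hm, hxz']⟩

variable [DecidableEq V]

lemma subtree_chain {par : V → V} {z : V} {Z : Finset V} (hZ : IsSubtree par z Z)
    {u : V} (hu : u ∈ Z) {m : ℕ} (hmin : ∀ k < m, par^[k] u ≠ z) :
    ∀ k, k ≤ m → par^[k] u ∈ Z := by
  intro k
  induction k with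
  | zero => intro _; exact hu
  | succ k ih =>
    intro hk
    have hkZ : par^[k] u ∈ Z := ih (Nat.le_of_succ_le hk)
    have hne : par^[k] u ≠ z := hmin k (by omega)
    rw [Function.iterate_succ_apply']
    exact hZ.2.2 _ hkZ hne

/-- If `Z` is a subtree rooted at `z`, `u ∈ Z` and `x` lies between `u` and `z`,
then `x ∈ Z`. -/
lemma mem_of_subtree_desc {par : V → V} {r : V} (hroot : par r = r)
    (hreach : ∀ v, ∃ n : ℕ, par^[n] v = r) {z : V} {Z : Finset V}
    (hZ : IsSubtree par z Z) {u x : V} (hu : u ∈ Z)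
    (hux : IsDesc par u x) (hxz : IsDesc par x z) : x ∈ Z := by
  have hd : ∃ n : ℕ, par^[n] u = z := hZ.2.1 u hu
  have hmz : par^[Nat.find hd] u = z := Nat.find_spec hd
  have hchain := subtree_chain hZ hu (m := Nat.find hd) (fun k hk => Nat.find_min hd hk)
  obtain ⟨k, hk, hkx⟩ := exists_iterate_eq hroot hreach hmz hux hxz
  rw [← hkx]; exact hchain k hk

/-- The descendants of `x` inside a subtree form a subtree rooted at `x`. -/
lemma subtree_filter_desc {par : V → V} {r : V} (hroot : par r = r)
    (hreach : ∀ v, ∃ n : ℕ, par^[n] v = r) {z : V} {Z : Finset V}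
    (hZ : IsSubtree par z Z) {x : V} (hx : x ∈ Z) :
    IsSubtree par x (Z.filter (fun u => IsDesc par u x)) := by
  refine ⟨Finset.mem_filter.mpr ⟨hx, isDesc_refl par x⟩, ?_, ?_⟩
  · intro u hu; exact (Finset.mem_filter.mp hu).2
  · intro u hu hne
    obtain ⟨huZ, hux⟩ := Finset.mem_filter.mp hu
    have huz : u ≠ z := by
      rintro rfl
      exact hne (isDesc_antisymm hroot hreach (hZ.2.1 x hx) hux).symm
    exact Finset.mem_filter.mpr ⟨hZ.2.2 u huZ huz, isDesc_par hux hne⟩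

/-- Key decomposition lemma: if `B` is a "covered" subtree rooted at `z'` and `C` is any
subtree rooted at `z'`, then the total surplus of `B \ C` is nonnegative. -/
lemma sdiff_sum_nonneg {par : V → V} {r : V} (hroot : par r = r)
    (hreach : ∀ v, ∃ n : ℕ, par^[n] v = r) (ℓ w : V → ℝ) {z' : V} {B C : Finset V}
    (hB : IsSubtree par z' B)
    (hBcov : ∀ t ∈ B, t ≠ z' →
      0 ≤ ∑ u ∈ B.filter (fun u => IsDesc par u t), (w u - ℓ u))
    (hC : IsSubtree par z' C) :
    0 ≤ ∑ u ∈ B \ C, (w u - ℓ u) := by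
  set T := (B \ C).filter (fun t => par t ∈ C) with hT
  have hpiece_sub : ∀ t ∈ T, B.filter (fun u => IsDesc par u t) ⊆ B \ C := by
    intro t ht u hu
    obtain ⟨huB, hut⟩ := Finset.mem_filter.mp hu
    obtain ⟨htB, htC⟩ := Finset.mem_sdiff.mp (Finset.mem_filter.mp ht).1
    refine Finset.mem_sdiff.mpr ⟨huB, fun huC => ?_⟩
    exact htC (mem_of_subtree_desc hroot hreach hC huC hut (hB.2.1 t htB))
  have hcover : B \ C = T.biUnion (fun t => B.filter (fun u => IsDesc par u t)) := by
    apply Finset.Subset.antisymm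
    · intro u hu
      obtain ⟨huB, huC⟩ := Finset.mem_sdiff.mp hu
      have hd : ∃ n : ℕ, par^[n] u = z' := hB.2.1 u huB
      have hmz : par^[Nat.find hd] u = z' := Nat.find_spec hd
      have hchain := subtree_chain hB huB (m := Nat.find hd) (fun k hk => Nat.find_min hd hk)
      have hq : ∃ k : ℕ, par^[k] u ∈ C := ⟨Nat.find hd, by rw [hmz]; exact hC.1⟩
      set k := Nat.find hq with hk
      have hkC : par^[k] u ∈ C := Nat.find_spec hq
      have hk0 : k ≠ 0 := by
        intro h0
        rw [h0] at hkC
        exact huC hkC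
      have hkle : k ≤ Nat.find hd := Nat.find_min' hq (by rw [hmz]; exact hC.1)
      set t := par^[k - 1] u with ht'
      have htB : t ∈ B := hchain (k - 1) (by omega)
      have htC : t ∉ C := Nat.find_min hq (by omega)
      have hpt : par t ∈ C := by
        have hks : k - 1 + 1 = k := by omega
        have heq : par (par^[k - 1] u) = par^[k] u := by
          calc par (par^[k - 1] u) = par^[k - 1 + 1] u :=
                (Function.iterate_succ_apply' par (k - 1) u).symm
            _ = par^[k] u := by rw [hks]
        rw [ht', heq]
        exact hkC
      have htT : t ∈ T := Finset.mem_filter.mpr ⟨Finset.mem_sdiff.mpr ⟨htB, htC⟩, hpt⟩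
      exact Finset.mem_biUnion.mpr ⟨t, htT, Finset.mem_filter.mpr ⟨huB, ⟨k - 1, rfl⟩⟩⟩
    · exact Finset.biUnion_subset.mpr hpiece_sub
  have key : ∀ t₁ ∈ T, ∀ t₂ ∈ T, ∀ u, u ∈ B → ∀ k₁ k₂ : ℕ,
      par^[k₁] u = t₁ → par^[k₂] u = t₂ → k₁ < k₂ → False := by
    intro t₁ ht₁ t₂ ht₂ u _ k₁ k₂ hk₁ hk₂ hlt
    obtain ⟨ht₁BC, ht₁p⟩ := Finset.mem_filter.mp ht₁
    obtain ⟨ht₂BC, _⟩ := Finset.mem_filter.mp ht₂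
    have ht₂B : t₂ ∈ B := (Finset.mem_sdiff.mp ht₂BC).1
    have ht₂C : t₂ ∉ C := (Finset.mem_sdiff.mp ht₂BC).2
    have hdesc : IsDesc par (par t₁) t₂ := by
      refine ⟨k₂ - k₁ - 1, ?_⟩
      have h1 : par^[k₂ - k₁] t₁ = t₂ := by
        rw [← hk₁, ← Function.iterate_add_apply, Nat.sub_add_cancel hlt.le, hk₂]
      rw [← h1]
      rw [← Function.iterate_succ_apply]
      congr 1
      omega
    exact ht₂C (mem_of_subtree_desc hroot hreach hC ht₁p hdesc (hB.2.1 t₂ ht₂B))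
  have hdisj : (↑T : Set V).PairwiseDisjoint
      (fun t => B.filter (fun u => IsDesc par u t)) := by
    intro t₁ ht₁ t₂ ht₂ hne
    simp only [Function.onFun]
    rw [Finset.disjoint_left]
    intro u hu1 hu2
    obtain ⟨huB, k₁, hk₁⟩ := Finset.mem_filter.mp hu1
    obtain ⟨_, k₂, hk₂⟩ := Finset.mem_filter.mp hu2
    rcases lt_trichotomy k₁ k₂ with h | h | h
    · exact key t₁ ht₁ t₂ ht₂ u huB k₁ k₂ hk₁ hk₂ h
    · exact hne (by rw [← hk₁, ← hk₂, h])
    · exact key t₂ ht₂ t₁ ht₁ u huB k₂ k₁ hk₂ hk₁ h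
  rw [hcover, Finset.sum_biUnion hdisj]
  apply Finset.sum_nonneg
  intro t ht
  obtain ⟨htBC, _⟩ := Finset.mem_filter.mp ht
  have htB : t ∈ B := (Finset.mem_sdiff.mp htBC).1
  have htz : t ≠ z' := fun h => (Finset.mem_sdiff.mp htBC).2 (h ▸ hC.1)
  exact hBcov t htB htz

end Aux

section CovAux

variable {V : Type*} [Fintype V] [DecidableEq V]

lemma covered_g_nonneg {par : V → V} {ℓ w : V → ℝ} {z : V} {Z : Finset V}
    (h : Covered par ℓ w z Z) :
    ∀ t ∈ Z, t ≠ z → 0 ≤ ∑ u ∈ Z.filter (fun u => IsDesc par u t), (w u - ℓ u) := by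
  intro t ht htz
  have := h.2 t ht htz
  rw [Finset.sum_sub_distrib]
  linarith

lemma covered_singleton (par : V → V) (ℓ w : V → ℝ) (z : V) :
    Covered par ℓ w z {z} := by
  refine ⟨⟨Finset.mem_singleton_self z, ?_, ?_⟩, ?_⟩
  · intro u hu
    rw [Finset.mem_singleton.mp hu]
    exact isDesc_refl par z
  · intro u hu hne; exact absurd (Finset.mem_singleton.mp hu) hne
  · intro x hx hne; exact absurd (Finset.mem_singleton.mp hx) hne

lemma covered_union_aux {par : V → V} {r : V} (hroot : par r = r)
    (hreach : ∀ v, ∃ n : ℕ, par^[n] v = r) {ℓ w : V → ℝ} {z x : V} {Z₁ Z₂ : Finset V}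
    (h1 : Covered par ℓ w z Z₁) (h2 : Covered par ℓ w z Z₂)
    (hx : x ∈ Z₁) (hxz : x ≠ z) :
    0 ≤ ∑ u ∈ (Z₁ ∪ Z₂).filter (fun u => IsDesc par u x), (w u - ℓ u) := by
  rw [Finset.filter_union, ← Finset.union_sdiff_self_eq_union,
    Finset.sum_union Finset.disjoint_sdiff]
  have hA : 0 ≤ ∑ u ∈ Z₁.filter (fun u => IsDesc par u x), (w u - ℓ u) :=
    covered_g_nonneg h1 x hx hxz
  have hB : 0 ≤ ∑ u ∈ Z₂.filter (fun u => IsDesc par u x) \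
      Z₁.filter (fun u => IsDesc par u x), (w u - ℓ u) := by
    by_cases hx2 : x ∈ Z₂
    · apply sdiff_sum_nonneg hroot hreach ℓ w
        (subtree_filter_desc hroot hreach h2.1 hx2) ?_
        (subtree_filter_desc hroot hreach h1.1 hx)
      intro t ht htx
      obtain ⟨htZ₂, htx'⟩ := Finset.mem_filter.mp ht
      have htz : t ≠ z := by
        rintro rfl
        exact hxz (isDesc_antisymm hroot hreach (h1.1.2.1 x hx) htx')
      have heq : (Z₂.filter (fun u => IsDesc par u x)).filter (fun u => IsDesc par u t)
          = Z₂.filter (fun u => IsDesc par u t) := by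
        rw [Finset.filter_filter]
        apply Finset.filter_congr
        intro u _
        exact ⟨And.right, fun h => ⟨isDesc_trans_s17 h htx', h⟩⟩
      rw [heq]
      exact covered_g_nonneg h2 t htZ₂ htz
    · have hemp : Z₂.filter (fun u => IsDesc par u x) = ∅ := by
        apply Finset.eq_empty_of_forall_notMem
        intro u hu
        obtain ⟨huZ₂, hux⟩ := Finset.mem_filter.mp hu
        exact hx2 (mem_of_subtree_desc hroot hreach h2.1 huZ₂ hux (h1.1.2.1 x hx))
      rw [hemp]
      simp
  linarith

lemma covered_union {par : V → V} {r : V} (hroot : par r = r)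
    (hreach : ∀ v, ∃ n : ℕ, par^[n] v = r) {ℓ w : V → ℝ} {z : V} {Z₁ Z₂ : Finset V}
    (h1 : Covered par ℓ w z Z₁) (h2 : Covered par ℓ w z Z₂) :
    Covered par ℓ w z (Z₁ ∪ Z₂) := by
  refine ⟨⟨Finset.mem_union_left _ h1.1.1, ?_, ?_⟩, ?_⟩
  · intro u hu
    rcases Finset.mem_union.mp hu with h | h
    · exact h1.1.2.1 u h
    · exact h2.1.2.1 u h
  · intro u hu hne
    rcases Finset.mem_union.mp hu with h | h
    · exact Finset.mem_union_left _ (h1.1.2.2 u h hne)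
    · exact Finset.mem_union_right _ (h2.1.2.2 u h hne)
  · intro x hx hxz
    have hg : 0 ≤ ∑ u ∈ (Z₁ ∪ Z₂).filter (fun u => IsDesc par u x), (w u - ℓ u) := by
      rcases Finset.mem_union.mp hx with h | h
      · exact covered_union_aux hroot hreach h1 h2 h hxz
      · rw [Finset.union_comm]
        exact covered_union_aux hroot hreach h2 h1 h hxz
    rw [Finset.sum_sub_distrib] at hg
    linarith

end CovAux

/-- The correctness invariant of the offline algorithm CovSubT for Single-Phase MLAP:
letting `A_z` be the union of all covered subtrees rooted at `z`, (1) `A_z` is the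
inclusion-maximal covered subtree rooted at `z`; (2) `A_z` maximizes the surplus
`∑_{u∈Z} w u − ℓ(Z ∖ {z})` over all subtrees `Z` rooted at `z`; (3) hence if any
subtree rooted at `z` is mature, so is `A_z`. -/
theorem stmt17 {V : Type*} [Fintype V] [DecidableEq V]
    (r : V) (par : V → V) (hroot : par r = r) (hreach : ∀ v, ∃ n : ℕ, par^[n] v = r)
    (ℓ w : V → ℝ) (hℓ : ∀ u, 0 ≤ ℓ u) (hw : ∀ u, 0 ≤ w u) (z : V) :
    let A : Finset V := Finset.univ.filter (fun u => ∃ Z, Covered par ℓ w z Z ∧ u ∈ Z)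
    (Covered par ℓ w z A ∧ ∀ Z, Covered par ℓ w z Z → Z ⊆ A) ∧
    (∀ Z : Finset V, IsSubtree par z Z →
      ∑ u ∈ Z, w u - ∑ u ∈ Z \ {z}, ℓ u ≤ ∑ u ∈ A, w u - ∑ u ∈ A \ {z}, ℓ u) ∧
    (∀ Z : Finset V, IsSubtree par z Z → ∑ u ∈ Z, ℓ u ≤ ∑ u ∈ Z, w u →
      ∑ u ∈ A, ℓ u ≤ ∑ u ∈ A, w u) := by
  intro A
  have hAdef : A = Finset.univ.filter (fun u => ∃ Z, Covered par ℓ w z Z ∧ u ∈ Z) := rfl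
  have hAmem : ∀ u, u ∈ A ↔ ∃ Z, Covered par ℓ w z Z ∧ u ∈ Z := by
    intro u
    rw [hAdef, Finset.mem_filter]
    simp
  have hsub : ∀ Z, Covered par ℓ w z Z → Z ⊆ A :=
    fun Z hZ u hu => (hAmem u).mpr ⟨Z, hZ, hu⟩
  have hzA : z ∈ A := hsub _ (covered_singleton par ℓ w z) (Finset.mem_singleton_self z)
  -- A is covered
  have hAcov : Covered par ℓ w z A := by
    set S : Finset (Finset V) := Finset.univ.filter (fun Z => Covered par ℓ w z Z) with hS
    have hgen : ∀ S' : Finset (Finset V), (∀ Z ∈ S', Covered par ℓ w z Z) →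
        Covered par ℓ w z ({z} ∪ S'.sup id) := by
      intro S'
      induction S' using Finset.induction_on with
      | empty =>
        intro _
        simpa using covered_singleton par ℓ w z
      | @insert Z S' hne ih =>
        intro hall
        have h1 : Covered par ℓ w z Z := hall Z (Finset.mem_insert_self _ _)
        have h2 := ih (fun Y hY => hall Y (Finset.mem_insert_of_mem hY))
        have heq : ({z} : Finset V) ∪ (insert Z S').sup id = Z ∪ ({z} ∪ S'.sup id) := by
          rw [Finset.sup_insert]
          ext u
          simp only [Finset.mem_union, Finset.mem_singleton, Finset.sup_eq_union, id,
            Finset.mem_sup]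
          tauto
        rw [heq]
        exact covered_union hroot hreach h1 h2
    have hAeq : A = {z} ∪ S.sup id := by
      ext u
      rw [hAmem u]
      simp only [Finset.mem_union, Finset.mem_singleton, Finset.mem_sup, hS,
        Finset.mem_filter, Finset.mem_univ, true_and, id]
      constructor
      · rintro ⟨Z, hZ, hu⟩; exact Or.inr ⟨Z, hZ, hu⟩
      · rintro (h | ⟨Z, hZ, hu⟩)
        · exact ⟨{z}, covered_singleton par ℓ w z, by rw [h]; exact Finset.mem_singleton_self z⟩
        · exact ⟨Z, hZ, hu⟩
    rw [hAeq]
    exact hgen S (fun Z hZ => (Finset.mem_filter.mp hZ).2)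
  -- key surplus maximality
  have key : ∀ Z : Finset V, IsSubtree par z Z →
      ∑ u ∈ Z, (w u - ℓ u) ≤ ∑ u ∈ A, (w u - ℓ u) := by
    set 𝒯 : Finset (Finset V) := Finset.univ.filter (fun Z => IsSubtree par z Z) with h𝒯
    have hne : 𝒯.Nonempty :=
      ⟨{z}, Finset.mem_filter.mpr ⟨Finset.mem_univ _, (covered_singleton par ℓ w z).1⟩⟩
    obtain ⟨Zs, hZs, hmax⟩ := Finset.exists_max_image 𝒯 (fun Z => ∑ u ∈ Z, (w u - ℓ u)) hne
    have hZsub : IsSubtree par z Zs := (Finset.mem_filter.mp hZs).2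
    have hmax' : ∀ Z, IsSubtree par z Z →
        ∑ u ∈ Z, (w u - ℓ u) ≤ ∑ u ∈ Zs, (w u - ℓ u) :=
      fun Z hZ => hmax Z (Finset.mem_filter.mpr ⟨Finset.mem_univ _, hZ⟩)
    have hZscov : Covered par ℓ w z Zs := by
      refine ⟨hZsub, ?_⟩
      intro x hx hxz
      set Z' := Zs.filter (fun u => ¬ IsDesc par u x) with hZ'
      have hZ'sub : IsSubtree par z Z' := by
        refine ⟨Finset.mem_filter.mpr ⟨hZsub.1,
          fun h => hxz (isDesc_antisymm hroot hreach (hZsub.2.1 x hx) h)⟩, ?_, ?_⟩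
        · intro u hu; exact hZsub.2.1 u (Finset.mem_filter.mp hu).1
        · intro u hu hne
          obtain ⟨huZ, hnd⟩ := Finset.mem_filter.mp hu
          exact Finset.mem_filter.mpr ⟨hZsub.2.2 u huZ hne, fun h => hnd (isDesc_of_par h)⟩
      have hsplit : ∑ u ∈ Zs.filter (fun u => IsDesc par u x), (w u - ℓ u)
          + ∑ u ∈ Z', (w u - ℓ u) = ∑ u ∈ Zs, (w u - ℓ u) :=
        Finset.sum_filter_add_sum_filter_not Zs _ _
      have hle := hmax' Z' hZ'sub
      have h0 : 0 ≤ ∑ u ∈ Zs.filter (fun u => IsDesc par u x), (w u - ℓ u) := by linarith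
      rw [Finset.sum_sub_distrib] at h0
      linarith
    have hZsA : Zs ⊆ A := hsub Zs hZscov
    have hsd : 0 ≤ ∑ u ∈ A \ Zs, (w u - ℓ u) :=
      sdiff_sum_nonneg hroot hreach ℓ w hAcov.1 (covered_g_nonneg hAcov) hZscov.1
    have hsum : ∑ u ∈ A \ Zs, (w u - ℓ u) + ∑ u ∈ Zs, (w u - ℓ u)
        = ∑ u ∈ A, (w u - ℓ u) := Finset.sum_sdiff hZsA
    intro Z hZ
    have := hmax' Z hZ
    linarith
  refine ⟨⟨hAcov, hsub⟩, ?_, ?_⟩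
  · intro Z hZ
    have hk := key Z hZ
    rw [Finset.sum_sub_distrib, Finset.sum_sub_distrib] at hk
    have e1 : ∑ u ∈ Z \ {z}, ℓ u = ∑ u ∈ Z, ℓ u - ℓ z := by
      rw [Finset.sdiff_singleton_eq_erase, Finset.sum_erase_eq_sub hZ.1]
    have e2 : ∑ u ∈ A \ {z}, ℓ u = ∑ u ∈ A, ℓ u - ℓ z := by
      rw [Finset.sdiff_singleton_eq_erase, Finset.sum_erase_eq_sub hzA]
    rw [e1, e2]
    linarith
  · intro Z hZ hmature
    have hk := key Z hZ
    rw [Finset.sum_sub_distrib, Finset.sum_sub_distrib] at hk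
    linarith
end
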